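/- arXiv:1810.01707 — 3 statements merged into one kernel-verified Lean document; each statement's English description precedes it below -/
import Mathlib

section
/- For all integers r ≥ 3 there exists N such that for all n ≥ N the following holds: for X = {2} ⊆ [n], the family AHM_3 is optimal for X, and moreover AHM_3 is the unique MLCIF in ([n] choose r) that is optimal for X. -/
open Finset

/-- The family of all `r`-element subsets of `[n] = {1, …, n}`. -/
def chooseFam (n r : ℕ) : Finset (Finset ℕ) := (Finset.Icc 1 n).powersetCard r

/-- A family of sets is intersecting if any two members meet. -/
def IntersectingFam (𝒜 : Finset (Finset ℕ)) : Prop :=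
  ∀ A ∈ 𝒜, ∀ B ∈ 𝒜, (A ∩ B).Nonempty

/-- `DomLE B A` : writing the elements in increasing order, the `i`-th element
of `B` is at most the `i`-th element of `A` (and they have the same size). -/
def DomLE (B A : Finset ℕ) : Prop :=
  B.card = A.card ∧
  ∀ (i : ℕ) (hB : i < (B.sort (· ≤ ·)).length) (hA : i < (A.sort (· ≤ ·)).length),
    (B.sort (· ≤ ·)).get ⟨i, hB⟩ ≤ (A.sort (· ≤ ·)).get ⟨i, hA⟩

/-- A family of `r`-subsets of `[n]` is left-compressed if it is downward closed
under the domination order. -/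
def LeftCompressed (n r : ℕ) (𝒜 : Finset (Finset ℕ)) : Prop :=
  ∀ A ∈ 𝒜, ∀ B ∈ chooseFam n r, DomLE B A → B ∈ 𝒜

/-- A left-compressed intersecting family in `([n] choose r)`. -/
def IsLCIF (n r : ℕ) (𝒜 : Finset (Finset ℕ)) : Prop :=
  𝒜 ⊆ chooseFam n r ∧ IntersectingFam 𝒜 ∧ LeftCompressed n r 𝒜

/-- A maximal left-compressed intersecting family. -/
def IsMLCIF (n r : ℕ) (𝒜 : Finset (Finset ℕ)) : Prop :=
  IsLCIF n r 𝒜 ∧ ∀ ℬ : Finset (Finset ℕ), IsLCIF n r ℬ → 𝒜 ⊆ ℬ → ℬ = 𝒜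

/-- The number of members of `𝒜` hitting `X`. -/
def hit (X : Finset ℕ) (𝒜 : Finset (Finset ℕ)) : ℕ :=
  (𝒜.filter fun A => (A ∩ X).Nonempty).card

/-- An MLCIF optimal for `X`: it maximises `hit X` among all MLCIFs. -/
def OptimalMLCIF (n r : ℕ) (X : Finset ℕ) (𝒜 : Finset (Finset ℕ)) : Prop :=
  IsMLCIF n r 𝒜 ∧ ∀ ℬ : Finset (Finset ℕ), IsMLCIF n r ℬ → hit X ℬ ≤ hit X 𝒜

/-- An LCIF optimal for `X` among all LCIFs. -/
def OptimalLCIF (n r : ℕ) (X : Finset ℕ) (𝒜 : Finset (Finset ℕ)) : Prop :=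
  IsLCIF n r 𝒜 ∧ ∀ ℬ : Finset (Finset ℕ), IsLCIF n r ℬ → hit X ℬ ≤ hit X 𝒜

/-- The `t`-adjusted Hilton–Milner family. -/
def AHM (n r t : ℕ) : Finset (Finset ℕ) :=
  (chooseFam n r).filter fun A =>
    (1 ∈ A ∧ (A ∩ Finset.Icc 2 t).Nonempty) ∨ Finset.Icc 2 t ⊆ A

/-- The star: all `r`-subsets of `[n]` containing `1`. -/
def starFam (n r : ℕ) : Finset (Finset ℕ) :=
  (chooseFam n r).filter fun A => 1 ∈ A

/-- `G ⊆ [n]` is a potential generator of `𝒜`: every `A ∈ ([n] choose r)`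
containing `G` lies in `𝒜`. -/
def PotGen (n r : ℕ) (𝒜 : Finset (Finset ℕ)) (G : Finset ℕ) : Prop :=
  G ⊆ Finset.Icc 1 n ∧ ∀ A ∈ chooseFam n r, G ⊆ A → A ∈ 𝒜

open Classical in
/-- The canonical generating family: all inclusion-minimal potential generators. -/
noncomputable def canonGen (n r : ℕ) (𝒜 : Finset (Finset ℕ)) : Finset (Finset ℕ) :=
  (Finset.Icc 1 n).powerset.filter fun G =>
    PotGen n r 𝒜 G ∧ ∀ G' ⊆ G, PotGen n r 𝒜 G' → G' = G

/-- The rank of `𝒜`: the smallest size of a generator. -/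
noncomputable def rankFam (n r : ℕ) (𝒜 : Finset (Finset ℕ)) : ℕ :=
  sInf {k : ℕ | ∃ G ∈ canonGen n r 𝒜, G.card = k}

/-- The family generated by `𝒢` with respect to `n` and `r`. -/
def genFam (n r : ℕ) (𝒢 : Finset (Finset ℕ)) : Finset (Finset ℕ) :=
  (chooseFam n r).filter fun A => ∃ G ∈ 𝒢, G ⊆ A

/-- `𝒜 ∈ I_j`: an MLCIF of rank two whose generators of size two are precisely
`{1,2}, {1,3}, …, {1,j}`. -/
noncomputable def MemI (n r j : ℕ) (𝒜 : Finset (Finset ℕ)) : Prop :=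
  IsMLCIF n r 𝒜 ∧ rankFam n r 𝒜 = 2 ∧
    (canonGen n r 𝒜).filter (fun G => G.card = 2) =
      (Finset.Icc 2 j).image fun i => ({1, i} : Finset ℕ)


/-- number of elements of `A` that are `≤ v`. -/
def cnt (A : Finset ℕ) (v : ℕ) : ℕ := (A.filter (fun x => x ≤ v)).card

lemma cnt_mono (A : Finset ℕ) {u v : ℕ} (h : u ≤ v) : cnt A u ≤ cnt A v :=
  Finset.card_le_card (fun x hx => by
    simp only [Finset.mem_filter] at hx ⊢; exact ⟨hx.1, le_trans hx.2 h⟩)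

lemma cnt_le_card (A : Finset ℕ) (v : ℕ) : cnt A v ≤ A.card :=
  Finset.card_le_card (Finset.filter_subset _ _)

lemma bridge (A : Finset ℕ) (i : ℕ) (h : i < (A.sort (· ≤ ·)).length) (v : ℕ) :
    (A.sort (· ≤ ·)).get ⟨i, h⟩ ≤ v ↔ i + 1 ≤ cnt A v := by
  constructor
  · intro hle
    have hinj : Set.InjOn (fun j : Fin (i+1) => (A.sort (· ≤ ·)).get ⟨j.1, lt_of_le_of_lt (Nat.lt_succ_iff.mp j.2) h⟩)
        ↑(Finset.univ : Finset (Fin (i+1))) := by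
      intro a _ b _ hab
      have := (A.sortedLT_sort).strictMono_get.injective hab
      exact Fin.ext (by simpa using congrArg Fin.val this)
    have hmap : ∀ j ∈ (Finset.univ : Finset (Fin (i+1))),
        (fun j : Fin (i+1) => (A.sort (· ≤ ·)).get ⟨j.1, lt_of_le_of_lt (Nat.lt_succ_iff.mp j.2) h⟩) j
          ∈ A.filter (fun x => x ≤ v) := by
      intro j _
      simp only [Finset.mem_filter]
      refine ⟨(Finset.mem_sort (α := ℕ) (· ≤ ·)).mp (List.get_mem _ _), ?_⟩
      exact le_trans ((A.sortedLT_sort).strictMono_get.monotone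
          (show (⟨j.1, _⟩ : Fin _) ≤ ⟨i, h⟩ from Nat.lt_succ_iff.mp j.2)) hle
    have := Finset.card_le_card_of_injOn _ hmap hinj
    simpa [cnt] using this
  · intro hc
    by_contra hgt
    push_neg at hgt
    have hsub : A.filter (fun y => y ≤ v) ⊆
        (Finset.univ : Finset (Fin i)).image (fun j => (A.sort (· ≤ ·)).get ⟨j.1, lt_trans j.2 h⟩) := by
      intro x hx
      simp only [Finset.mem_filter] at hx
      obtain ⟨j, hj⟩ := List.mem_iff_get.mp ((Finset.mem_sort (α := ℕ) (· ≤ ·)).mpr hx.1)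
      have hji : j.1 < i := by
        by_contra hge
        push_neg at hge
        have hmono : (A.sort (· ≤ ·)).get ⟨i, h⟩ ≤ (A.sort (· ≤ ·)).get j :=
          (A.sortedLT_sort).strictMono_get.monotone hge
        rw [hj] at hmono
        omega
      simp only [Finset.mem_image, Finset.mem_univ]
      exact ⟨⟨j.1, hji⟩, trivial, by rw [← hj]⟩
    have hcard := Finset.card_le_card hsub
    have : ((Finset.univ : Finset (Fin i)).image (fun j => (A.sort (· ≤ ·)).get ⟨j.1, lt_trans j.2 h⟩)).card ≤ i := by
      calc _ ≤ (Finset.univ : Finset (Fin i)).card := Finset.card_image_le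
        _ = i := by simp
    simp only [cnt] at hc
    omega

lemma domle_iff (B A : Finset ℕ) :
    DomLE B A ↔ (B.card = A.card ∧ ∀ v, cnt A v ≤ cnt B v) := by
  constructor
  · rintro ⟨hcard, hdom⟩
    refine ⟨hcard, fun v => ?_⟩
    rcases Nat.eq_zero_or_pos (cnt A v) with h0 | hpos
    · omega
    · set c := cnt A v with hc
      have hlenA : (A.sort (· ≤ ·)).length = A.card := Finset.length_sort _
      have hlenB : (B.sort (· ≤ ·)).length = B.card := Finset.length_sort _
      have hcA : c ≤ A.card := cnt_le_card A v
      have hiA : c - 1 < (A.sort (· ≤ ·)).length := by omega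
      have hiB : c - 1 < (B.sort (· ≤ ·)).length := by omega
      have hgA : (A.sort (· ≤ ·)).get ⟨c - 1, hiA⟩ ≤ v := by
        rw [bridge]
        omega
      have := le_trans (hdom (c-1) hiB hiA) hgA
      rw [bridge] at this
      omega
  · rintro ⟨hcard, hcnt⟩
    refine ⟨hcard, fun i hB hA => ?_⟩
    set v := (A.sort (· ≤ ·)).get ⟨i, hA⟩ with hv
    have h1 : i + 1 ≤ cnt A v := (bridge A i hA v).mp le_rfl
    have h2 : i + 1 ≤ cnt B v := le_trans h1 (hcnt v)
    exact (bridge B i hB v).mpr h2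

lemma mem_chooseFam {n r : ℕ} {A : Finset ℕ} :
    A ∈ chooseFam n r ↔ A ⊆ Finset.Icc 1 n ∧ A.card = r :=
  Finset.mem_powersetCard

lemma cnt_step (X : Finset ℕ) {u v : ℕ} (h : u ≤ v) : cnt X v ≤ cnt X u + (v - u) := by
  have hsub : X.filter (fun x => x ≤ v) ⊆ X.filter (fun x => x ≤ u) ∪ Finset.Icc (u+1) v := by
    intro x hx
    simp only [Finset.mem_filter, Finset.mem_union, Finset.mem_Icc] at hx ⊢
    rcases le_or_gt x u with h' | h'
    · exact Or.inl ⟨hx.1, h'⟩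
    · exact Or.inr ⟨h', hx.2⟩
  calc cnt X v ≤ _ := Finset.card_le_card hsub
    _ ≤ cnt X u + (Finset.Icc (u+1) v).card := Finset.card_union_le _ _
    _ = cnt X u + (v - u) := by rw [Nat.card_Icc]; congr 1; omega

lemma inter_Icc_card {n : ℕ} {A : Finset ℕ} (hA : A ⊆ Finset.Icc 1 n) (v : ℕ) :
    (Finset.Icc 1 v ∩ A).card = cnt A v := by
  unfold cnt
  congr 1
  ext x
  simp only [Finset.mem_inter, Finset.mem_Icc, Finset.mem_filter]
  constructor
  · rintro ⟨⟨h1, h2⟩, h3⟩; exact ⟨h3, h2⟩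
  · rintro ⟨h1, h2⟩
    have := Finset.mem_Icc.mp (hA h1)
    exact ⟨⟨this.1, h2⟩, h1⟩

lemma cnt_ge_of_card {n r : ℕ} {A : Finset ℕ} (hA : A ⊆ Finset.Icc 1 n)
    (hc : A.card = r) (v : ℕ) : r ≤ cnt A v + (n - v) := by
  have hsplit := Finset.card_filter_add_card_filter_not (s := A) (p := fun x => x ≤ v)
  have hsub : A.filter (fun x => ¬ x ≤ v) ⊆ Finset.Icc (v+1) n := by
    intro x hx
    simp only [Finset.mem_filter] at hx
    have := Finset.mem_Icc.mp (hA hx.1)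
    simp only [Finset.mem_Icc]
    omega
  have := Finset.card_le_card hsub
  rw [Nat.card_Icc] at this
  unfold cnt
  omega

lemma mem_AHM3 {n r : ℕ} {A : Finset ℕ} (hr : 3 ≤ r) :
    A ∈ AHM n r 3 ↔ A ∈ chooseFam n r ∧ 2 ≤ cnt A 3 := by
  rw [AHM, Finset.mem_filter]
  constructor
  · rintro ⟨hcf, hcond⟩
    refine ⟨hcf, ?_⟩
    have hsub := (mem_chooseFam.mp hcf).1
    have htwo : ∃ x ∈ A, ∃ y ∈ A, x ≠ y ∧ x ≤ 3 ∧ y ≤ 3 := by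
      rcases hcond with ⟨h1, x, hx⟩ | hss
      · simp only [Finset.mem_inter, Finset.mem_Icc] at hx
        exact ⟨1, h1, x, hx.1, by omega, by omega, by omega⟩
      · have h2 : 2 ∈ A := hss (by simp)
        have h3 : 3 ∈ A := hss (by simp)
        exact ⟨2, h2, 3, h3, by omega, by omega, by omega⟩
    obtain ⟨x, hx, y, hy, hne, hx3, hy3⟩ := htwo
    have : 1 < (A.filter (fun z => z ≤ 3)).card :=
      Finset.one_lt_card.mpr ⟨x, Finset.mem_filter.mpr ⟨hx, hx3⟩,
        y, Finset.mem_filter.mpr ⟨hy, hy3⟩, hne⟩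
    unfold cnt; omega
  · rintro ⟨hcf, hcnt⟩
    refine ⟨hcf, ?_⟩
    have hsub := (mem_chooseFam.mp hcf).1
    obtain ⟨x, hx, y, hy, hne⟩ := Finset.one_lt_card.mp (show 1 < (A.filter (fun z => z ≤ 3)).card by unfold cnt at hcnt; omega)
    simp only [Finset.mem_filter] at hx hy
    have hx1 : 1 ≤ x := (Finset.mem_Icc.mp (hsub hx.1)).1
    have hy1 : 1 ≤ y := (Finset.mem_Icc.mp (hsub hy.1)).1
    have hmem : (A ∩ Finset.Icc 2 3).Nonempty ↔ (2 ∈ A ∨ 3 ∈ A) := by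
      constructor
      · rintro ⟨z, hz⟩
        simp only [Finset.mem_inter, Finset.mem_Icc] at hz
        rcases hz with ⟨hzA, hz2, hz3⟩
        interval_cases z
        · exact Or.inl hzA
        · exact Or.inr hzA
      · rintro (h | h)
        · exact ⟨2, Finset.mem_inter.mpr ⟨h, by simp⟩⟩
        · exact ⟨3, Finset.mem_inter.mpr ⟨h, by simp⟩⟩
    have hss : Finset.Icc 2 3 ⊆ A ↔ (2 ∈ A ∧ 3 ∈ A) := by
      constructor
      · intro h; exact ⟨h (by simp), h (by simp)⟩
      · rintro ⟨h2, h3⟩ z hz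
        simp only [Finset.mem_Icc] at hz
        obtain ⟨hz2, hz3⟩ := hz
        interval_cases z
        · exact h2
        · exact h3
    rw [hmem, hss]
    have hx3 := hx.2; have hy3 := hy.2
    have hxA := hx.1; have hyA := hy.1
    interval_cases x <;> interval_cases y <;> tauto

lemma cross_intersecting {n : ℕ} {A B : Finset ℕ} (hA : A ⊆ Finset.Icc 1 n)
    (hB : B ⊆ Finset.Icc 1 n) (hA3 : 2 ≤ cnt A 3) (hB3 : 2 ≤ cnt B 3) :
    (A ∩ B).Nonempty := by
  have hsub : A.filter (fun x => x ≤ 3) ∪ B.filter (fun x => x ≤ 3) ⊆ Finset.Icc 1 3 := by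
    intro x hx
    rcases Finset.mem_union.mp hx with h | h
    · have h' := Finset.mem_filter.mp h
      have := Finset.mem_Icc.mp (hA h'.1)
      simp only [Finset.mem_Icc]; omega
    · have h' := Finset.mem_filter.mp h
      have := Finset.mem_Icc.mp (hB h'.1)
      simp only [Finset.mem_Icc]; omega
  have h1 : (A.filter (fun x => x ≤ 3) ∪ B.filter (fun x => x ≤ 3)).card ≤ 3 := by
    have := Finset.card_le_card hsub
    simpa [Nat.card_Icc] using this
  have h2 := Finset.card_union_add_card_inter (A.filter (fun x => x ≤ 3)) (B.filter (fun x => x ≤ 3))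
  have h3 : 0 < (A.filter (fun x => x ≤ 3) ∩ B.filter (fun x => x ≤ 3)).card := by
    unfold cnt at hA3 hB3
    omega
  obtain ⟨x, hx⟩ := Finset.card_pos.mp h3
  obtain ⟨hx1, hx2⟩ := Finset.mem_inter.mp hx
  exact ⟨x, Finset.mem_inter.mpr ⟨(Finset.mem_filter.mp hx1).1, (Finset.mem_filter.mp hx2).1⟩⟩

lemma AHM3_isLCIF {n r : ℕ} (hr : 3 ≤ r) : IsLCIF n r (AHM n r 3) := by
  refine ⟨Finset.filter_subset _ _, ?_, ?_⟩
  · intro A hA B hB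
    rw [mem_AHM3 hr] at hA hB
    exact cross_intersecting (mem_chooseFam.mp hA.1).1 (mem_chooseFam.mp hB.1).1 hA.2 hB.2
  · intro A hA B hB hdom
    rw [mem_AHM3 hr] at hA ⊢
    exact ⟨hB, le_trans hA.2 (((domle_iff B A).mp hdom).2 3)⟩

lemma exists_disjoint_AHM3 {n r : ℕ} (hr : 3 ≤ r) (hn : 2*r + 1 ≤ n) {A : Finset ℕ}
    (hA : A ∈ chooseFam n r) (hcnt : cnt A 3 ≤ 1) :
    ∃ B ∈ AHM n r 3, A ∩ B = ∅ := by
  obtain ⟨hAsub, hAcard⟩ := mem_chooseFam.mp hA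
  have hs1 : 2 ≤ ((Finset.Icc 1 3) \ A).card := by
    have h1 := Finset.card_sdiff_add_card_inter (Finset.Icc 1 3) A
    rw [inter_Icc_card hAsub 3] at h1
    have : (Finset.Icc (1:ℕ) 3).card = 3 := by simp [Nat.card_Icc]
    omega
  obtain ⟨t1, ht1sub, ht1card⟩ := Finset.exists_subset_card_eq hs1
  have hs2 : r - 2 ≤ ((Finset.Icc 4 n) \ A).card := by
    have h1 := Finset.card_sdiff_add_card_inter (Finset.Icc 4 n) A
    have h2 : (Finset.Icc 4 n ∩ A).card ≤ r := by
      rw [← hAcard]; exact Finset.card_le_card Finset.inter_subset_right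
    have : (Finset.Icc (4:ℕ) n).card = n - 3 := by rw [Nat.card_Icc]; omega
    omega
  obtain ⟨t2, ht2sub, ht2card⟩ := Finset.exists_subset_card_eq hs2
  have ht1' : t1 ⊆ Finset.Icc 1 3 := fun x hx => (Finset.mem_sdiff.mp (ht1sub hx)).1
  have ht2' : t2 ⊆ Finset.Icc 4 n := fun x hx => (Finset.mem_sdiff.mp (ht2sub hx)).1
  have hdisj : Disjoint t1 t2 := by
    rw [Finset.disjoint_left]
    intro x hx1 hx2
    have h1 := Finset.mem_Icc.mp (ht1' hx1)
    have h2 := Finset.mem_Icc.mp (ht2' hx2)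
    omega
  refine ⟨t1 ∪ t2, ?_, ?_⟩
  · rw [mem_AHM3 hr]
    constructor
    · rw [mem_chooseFam]
      constructor
      · intro x hx
        rcases Finset.mem_union.mp hx with h | h
        · have := Finset.mem_Icc.mp (ht1' h); simp only [Finset.mem_Icc]; omega
        · have := Finset.mem_Icc.mp (ht2' h); simp only [Finset.mem_Icc]; omega
      · rw [Finset.card_union_of_disjoint hdisj]; omega
    · have : t1 ⊆ (t1 ∪ t2).filter (fun x => x ≤ 3) := by
        intro x hx
        refine Finset.mem_filter.mpr ⟨Finset.mem_union_left _ hx, ?_⟩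
        exact (Finset.mem_Icc.mp (ht1' hx)).2
      have := Finset.card_le_card this
      unfold cnt; omega
  · rw [Finset.eq_empty_iff_forall_notMem]
    intro x hx
    obtain ⟨hxA, hxB⟩ := Finset.mem_inter.mp hx
    rcases Finset.mem_union.mp hxB with h | h
    · exact (Finset.mem_sdiff.mp (ht1sub h)).2 hxA
    · exact (Finset.mem_sdiff.mp (ht2sub h)).2 hxA

lemma AHM3_max {n r : ℕ} (hr : 3 ≤ r) (hn : 2*r + 1 ≤ n) :
    ∀ ℬ : Finset (Finset ℕ), IsLCIF n r ℬ → AHM n r 3 ⊆ ℬ → ℬ = AHM n r 3 := by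
  intro ℬ hL hsub
  refine Finset.Subset.antisymm ?_ hsub
  intro A hA
  have hAc : A ∈ chooseFam n r := hL.1 hA
  by_contra hnot
  have hcnt : cnt A 3 ≤ 1 := by
    by_contra h
    exact hnot ((mem_AHM3 hr).mpr ⟨hAc, by omega⟩)
  obtain ⟨B, hB, hdisj⟩ := exists_disjoint_AHM3 hr hn hAc hcnt
  have := hL.2.1 A hA B (hsub hB)
  rw [hdisj] at this
  exact Finset.not_nonempty_empty this

lemma AHM3_isMLCIF {n r : ℕ} (hr : 3 ≤ r) (hn : 2*r + 1 ≤ n) :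
    IsMLCIF n r (AHM n r 3) :=
  ⟨AHM3_isLCIF hr, AHM3_max hr hn⟩

/-- the maximal element of `AHM n r 3` in the domination order -/
def Mtop (n r : ℕ) : Finset ℕ := insert 2 (insert 3 (Finset.Icc (n-r+3) n))

lemma mem_Mtop {n r x : ℕ} : x ∈ Mtop n r ↔ x = 2 ∨ x = 3 ∨ (n-r+3 ≤ x ∧ x ≤ n) := by
  simp [Mtop, Finset.mem_Icc]

lemma Mtop_mem_chooseFam {n r : ℕ} (hr : 3 ≤ r) (hn : 2*r+1 ≤ n) :
    Mtop n r ∈ chooseFam n r := by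
  rw [mem_chooseFam]
  constructor
  · intro x hx
    rw [mem_Mtop] at hx
    simp only [Finset.mem_Icc]
    omega
  · have h3 : (3:ℕ) ∉ Finset.Icc (n-r+3) n := by simp only [Finset.mem_Icc]; omega
    have h2 : (2:ℕ) ∉ insert 3 (Finset.Icc (n-r+3) n) := by
      simp only [Finset.mem_insert, Finset.mem_Icc]; omega
    rw [Mtop, Finset.card_insert_of_notMem h2, Finset.card_insert_of_notMem h3, Nat.card_Icc]
    omega

lemma Mtop_mem_AHM3 {n r : ℕ} (hr : 3 ≤ r) (hn : 2*r+1 ≤ n) :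
    Mtop n r ∈ AHM n r 3 := by
  rw [mem_AHM3 hr]
  refine ⟨Mtop_mem_chooseFam hr hn, ?_⟩
  have h2 : 2 ∈ (Mtop n r).filter (fun x => x ≤ 3) :=
    Finset.mem_filter.mpr ⟨mem_Mtop.mpr (Or.inl rfl), by omega⟩
  have h3 : 3 ∈ (Mtop n r).filter (fun x => x ≤ 3) :=
    Finset.mem_filter.mpr ⟨mem_Mtop.mpr (Or.inr (Or.inl rfl)), by omega⟩
  have := Finset.one_lt_card.mpr ⟨2, h2, 3, h3, by omega⟩
  unfold cnt; omega

lemma domle_Mtop {n r : ℕ} (hr : 3 ≤ r) (hn : 2*r+1 ≤ n) {B : Finset ℕ}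
    (hB : B ∈ AHM n r 3) : DomLE B (Mtop n r) := by
  rw [mem_AHM3 hr] at hB
  obtain ⟨hBc, hB3⟩ := hB
  obtain ⟨hBsub, hBcard⟩ := mem_chooseFam.mp hBc
  obtain ⟨hMsub, hMcard⟩ := mem_chooseFam.mp (Mtop_mem_chooseFam hr hn)
  rw [domle_iff]
  refine ⟨by rw [hBcard, hMcard], ?_⟩
  intro v
  -- basic facts about B
  have hB2 : 1 ≤ cnt B 2 := by
    obtain ⟨x, hx, y, hy, hne⟩ := Finset.one_lt_card.mp
      (show 1 < (B.filter (fun z => z ≤ 3)).card by unfold cnt at hB3; omega)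
    obtain ⟨hxB, hx3⟩ := Finset.mem_filter.mp hx
    obtain ⟨hyB, hy3⟩ := Finset.mem_filter.mp hy
    have hx1 : 1 ≤ x := (Finset.mem_Icc.mp (hBsub hxB)).1
    have hy1 : 1 ≤ y := (Finset.mem_Icc.mp (hBsub hyB)).1
    rcases (show x ≤ 2 ∨ y ≤ 2 by omega) with h | h
    · have : x ∈ B.filter (fun z => z ≤ 2) := Finset.mem_filter.mpr ⟨hxB, h⟩
      have := Finset.card_pos.mpr ⟨x, this⟩
      unfold cnt; omega
    · have : y ∈ B.filter (fun z => z ≤ 2) := Finset.mem_filter.mpr ⟨hyB, h⟩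
      have := Finset.card_pos.mpr ⟨y, this⟩
      unfold cnt; omega
  have hBv := cnt_ge_of_card hBsub hBcard v
  -- bounds on cnt of Mtop
  have hM0 : ∀ w, w ≤ 1 → cnt (Mtop n r) w = 0 := by
    intro w hw
    unfold cnt
    rw [Finset.card_eq_zero, Finset.filter_eq_empty_iff]
    intro x hx
    rw [mem_Mtop] at hx
    omega
  have hM2 : cnt (Mtop n r) 2 ≤ 1 := by
    unfold cnt
    have : (Mtop n r).filter (fun x => x ≤ 2) ⊆ {2} := by
      intro x hx
      obtain ⟨hx1, hx2⟩ := Finset.mem_filter.mp hx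
      rw [mem_Mtop] at hx1
      simp only [Finset.mem_singleton]
      omega
    simpa using Finset.card_le_card this
  have hMmid : ∀ w, w ≤ n-r+2 → cnt (Mtop n r) w ≤ 2 := by
    intro w hw
    unfold cnt
    have : (Mtop n r).filter (fun x => x ≤ w) ⊆ {2, 3} := by
      intro x hx
      obtain ⟨hx1, hx2⟩ := Finset.mem_filter.mp hx
      rw [mem_Mtop] at hx1
      simp only [Finset.mem_insert, Finset.mem_singleton]
      omega
    calc _ ≤ ({2,3} : Finset ℕ).card := Finset.card_le_card this
      _ ≤ 2 := by simp [Finset.card_insert_le]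
  -- case analysis on v
  rcases Nat.lt_or_ge v 2 with hv | hv
  · rw [hM0 v (by omega)]; omega
  rcases Nat.lt_or_ge v 3 with hv' | hv'
  · have : v = 2 := by omega
    subst this
    omega
  rcases Nat.lt_or_ge v (n-r+3) with hv'' | hv''
  · have h1 := hMmid v (by omega)
    have h2 : cnt B 3 ≤ cnt B v := cnt_mono B (by omega)
    omega
  · have h1 : cnt (Mtop n r) v ≤ 2 + (v - (n-r+2)) := by
      have := cnt_step (Mtop n r) (show n-r+2 ≤ v by omega)
      have := hMmid (n-r+2) le_rfl
      omega
    have h2 := cnt_le_card (Mtop n r) v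
    rw [hMcard] at h2
    omega

lemma AHM3_subset_of_Mtop_mem {n r : ℕ} (hr : 3 ≤ r) (hn : 2*r+1 ≤ n)
    {𝒜 : Finset (Finset ℕ)} (hL : IsLCIF n r 𝒜) (hM : Mtop n r ∈ 𝒜) :
    AHM n r 3 ⊆ 𝒜 := by
  intro B hB
  exact hL.2.2 (Mtop n r) hM B ((mem_AHM3 hr).mp hB).1 (domle_Mtop hr hn hB)

lemma eq_AHM3_of_Mtop_mem {n r : ℕ} (hr : 3 ≤ r) (hn : 2*r+1 ≤ n)
    {𝒜 : Finset (Finset ℕ)} (hM : IsMLCIF n r 𝒜) (hMt : Mtop n r ∈ 𝒜) :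
    𝒜 = AHM n r 3 :=
  AHM3_max hr hn 𝒜 hM.1 (AHM3_subset_of_Mtop_mem hr hn hM.1 hMt)

lemma exists_C_of_Mtop_not_mem {n r : ℕ} (hr : 3 ≤ r) (hn : 2*r+1 ≤ n)
    {𝒜 : Finset (Finset ℕ)} (hM : IsMLCIF n r 𝒜) (hMt : Mtop n r ∉ 𝒜) :
    ∃ C ∈ 𝒜, cnt C 3 ≤ 1 := by
  by_contra hcon
  push_neg at hcon
  have hall : ∀ C ∈ 𝒜, 2 ≤ cnt C 3 := fun C hC => by have := hcon C hC; omega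
  have hLCIF : IsLCIF n r (𝒜 ∪ AHM n r 3) := by
    refine ⟨Finset.union_subset hM.1.1 (Finset.filter_subset _ _), ?_, ?_⟩
    · intro A hA B hB
      have hA3 : 2 ≤ cnt A 3 := by
        rcases Finset.mem_union.mp hA with h | h
        · exact hall A h
        · exact ((mem_AHM3 hr).mp h).2
      have hB3 : 2 ≤ cnt B 3 := by
        rcases Finset.mem_union.mp hB with h | h
        · exact hall B h
        · exact ((mem_AHM3 hr).mp h).2
      have hAsub : A ⊆ Finset.Icc 1 n := by
        rcases Finset.mem_union.mp hA with h | h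
        · exact (mem_chooseFam.mp (hM.1.1 h)).1
        · exact (mem_chooseFam.mp ((mem_AHM3 hr).mp h).1).1
      have hBsub : B ⊆ Finset.Icc 1 n := by
        rcases Finset.mem_union.mp hB with h | h
        · exact (mem_chooseFam.mp (hM.1.1 h)).1
        · exact (mem_chooseFam.mp ((mem_AHM3 hr).mp h).1).1
      exact cross_intersecting hAsub hBsub hA3 hB3
    · intro A hA B hB hdom
      rcases Finset.mem_union.mp hA with h | h
      · exact Finset.mem_union_left _ (hM.1.2.2 A h B hB hdom)
      · exact Finset.mem_union_right _ ((AHM3_isLCIF hr).2.2 A h B hB hdom)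
  have := hM.2 _ hLCIF Finset.subset_union_left
  have hMem : Mtop n r ∈ 𝒜 ∪ AHM n r 3 :=
    Finset.mem_union_right _ (Mtop_mem_AHM3 hr hn)
  rw [this] at hMem
  exact hMt hMem

lemma core_bound {n r : ℕ} (hr : 3 ≤ r) (hn : 2*r+1 ≤ n)
    {𝒜 : Finset (Finset ℕ)} (hL : IsLCIF n r 𝒜)
    {C : Finset ℕ} (hC : C ∈ 𝒜) (hC3 : cnt C 3 ≤ 1)
    {A : Finset ℕ} (hA : A ∈ 𝒜) (h2 : 2 ∈ A) (h1 : 1 ∉ A) :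
    3 ≤ cnt A (r+2) := by
  by_contra hlt
  push_neg at hlt
  have hAr2 : cnt A (r+2) ≤ 2 := by omega
  obtain ⟨hAsub, hAcard⟩ := mem_chooseFam.mp (hL.1 hA)
  obtain ⟨hCsub, hCcard⟩ := mem_chooseFam.mp (hL.1 hC)
  -- small count facts
  have hA1 : cnt A 1 = 0 := by
    unfold cnt
    rw [Finset.card_eq_zero, Finset.filter_eq_empty_iff]
    intro x hx h'
    have := Finset.mem_Icc.mp (hAsub hx)
    have : x = 1 := by omega
    exact h1 (this ▸ hx)
  have hA2 : cnt A 2 ≤ 1 := by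
    unfold cnt
    have : A.filter (fun x => x ≤ 2) ⊆ {2} := by
      intro x hx
      obtain ⟨hxA, hx2⟩ := Finset.mem_filter.mp hx
      have := Finset.mem_Icc.mp (hAsub hxA)
      have hx1 : x = 1 ∨ x = 2 := by omega
      rcases hx1 with h | h
      · exact absurd (h ▸ hxA) h1
      · simp [h]
    simpa using Finset.card_le_card this
  have hC0 : cnt C 0 = 0 := by
    unfold cnt
    rw [Finset.card_eq_zero, Finset.filter_eq_empty_iff]
    intro x hx h'
    have := Finset.mem_Icc.mp (hCsub hx)
    omega
  -- the key count estimate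
  have key : ∀ v, v ≤ n → cnt A v + cnt C v ≤ v := by
    intro v hv
    rcases Nat.lt_or_ge v 3 with hv3 | hv3
    · have e1 : cnt A v ≤ cnt A 2 := cnt_mono A (by omega)
      have e2 : cnt C v ≤ cnt C 3 := cnt_mono C (by omega)
      have e3 : cnt A v ≤ cnt A 1 ∨ v = 2 := by
        rcases Nat.lt_or_ge v 2 with h | h
        · exact Or.inl (cnt_mono A (by omega))
        · exact Or.inr (by omega)
      have e4 : cnt C v ≤ cnt C 0 ∨ 1 ≤ v := by
        rcases Nat.eq_zero_or_pos v with h | h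
        · exact Or.inl (cnt_mono C (by omega))
        · exact Or.inr h
      omega
    rcases Nat.lt_or_ge v (r+3) with hvr | hvr
    · have e1 : cnt A v ≤ cnt A (r+2) := cnt_mono A (by omega)
      have e2 : cnt C v ≤ cnt C 3 + (v - 3) := cnt_step C (by omega)
      omega
    · have e1 : cnt A v ≤ cnt A (r+2) + (v - (r+2)) := cnt_step A (by omega)
      have e2 := cnt_le_card C v
      rw [hCcard] at e2
      omega
  -- the set W of non-elements of C, and its r smallest elements Z
  have hWcard : ((Finset.Icc 1 n) \ C).card = n - r := by
    rw [Finset.card_sdiff_of_subset hCsub, Nat.card_Icc, hCcard]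
    omega
  have hWlen : (((Finset.Icc 1 n) \ C).sort (· ≤ ·)).length = n - r := by
    rw [Finset.length_sort, hWcard]
  have hidx : r - 1 < (((Finset.Icc 1 n) \ C).sort (· ≤ ·)).length := by
    rw [hWlen]; omega
  set W := (Finset.Icc 1 n) \ C with hW
  set m := (W.sort (· ≤ ·)).get ⟨r-1, hidx⟩ with hm
  have hmW : m ∈ W := (Finset.mem_sort (α := ℕ) (· ≤ ·)).mp (List.get_mem _ _)
  have hmn : m ≤ n := by
    have := Finset.mem_sdiff.mp hmW
    exact (Finset.mem_Icc.mp this.1).2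
  have hcntWm : cnt W m = r := by
    have hge : r ≤ cnt W m := by
      have := (bridge W (r-1) hidx m).mp le_rfl
      omega
    have hle : cnt W m ≤ r := by
      by_contra hgt
      push_neg at hgt
      have hidx2 : r < (W.sort (· ≤ ·)).length := by rw [hWlen]; omega
      have := (bridge W r hidx2 m).mpr (by omega)
      have hlt2 : (W.sort (· ≤ ·)).get ⟨r-1, hidx⟩ < (W.sort (· ≤ ·)).get ⟨r, hidx2⟩ :=
        (W.sortedLT_sort).strictMono_get (by simp; omega)
      omega
    omega
  have hcntW : ∀ v, v ≤ n → cnt W v = v - cnt C v := by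
    intro v hv
    have hfil : W.filter (fun x => x ≤ v) = Finset.Icc 1 v \ C := by
      ext x
      simp only [Finset.mem_filter, hW, Finset.mem_sdiff, Finset.mem_Icc]
      constructor
      · rintro ⟨⟨⟨ha, hb⟩, hc⟩, hd⟩; exact ⟨⟨ha, hd⟩, hc⟩
      · rintro ⟨⟨ha, hb⟩, hc⟩; exact ⟨⟨⟨ha, by omega⟩, hc⟩, hb⟩
    have h1 := Finset.card_sdiff_add_card_inter (Finset.Icc 1 v) C
    rw [inter_Icc_card hCsub v, Nat.card_Icc] at h1
    unfold cnt at h1 ⊢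
    rw [hfil]
    omega
  set Z := W.filter (fun x => x ≤ m) with hZ
  have hZcard : Z.card = r := hcntWm
  have hZchoose : Z ∈ chooseFam n r := by
    rw [mem_chooseFam]
    exact ⟨fun x hx => (Finset.mem_sdiff.mp (Finset.filter_subset _ _ hx)).1, hZcard⟩
  have hdom : DomLE Z A := by
    rw [domle_iff]
    refine ⟨by rw [hZcard, hAcard], ?_⟩
    intro v
    rcases le_or_gt v m with hvm | hvm
    · have hfil : Z.filter (fun x => x ≤ v) = W.filter (fun x => x ≤ v) := by
        ext x
        simp only [hZ, Finset.mem_filter]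
        constructor
        · rintro ⟨⟨ha, hb⟩, hc⟩; exact ⟨ha, hc⟩
        · rintro ⟨ha, hb⟩; exact ⟨⟨ha, le_trans hb hvm⟩, hb⟩
      have h1 : cnt Z v = cnt W v := by unfold cnt; rw [hfil]
      have h2 := hcntW v (le_trans hvm hmn)
      have h3 := key v (le_trans hvm hmn)
      omega
    · have hfil : Z.filter (fun x => x ≤ v) = Z := by
        apply Finset.filter_true_of_mem
        intro x hx
        have := (Finset.mem_filter.mp hx).2
        omega
      have h1 : cnt Z v = r := by unfold cnt; rw [hfil]; exact hZcard
      have h2 := cnt_le_card A v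
      rw [hAcard] at h2
      omega
  have hZmem : Z ∈ 𝒜 := hL.2.2 A hA Z hZchoose hdom
  obtain ⟨x, hx⟩ := hL.2.1 Z hZmem C hC
  obtain ⟨hxZ, hxC⟩ := Finset.mem_inter.mp hx
  exact (Finset.mem_sdiff.mp (Finset.filter_subset _ _ hxZ)).2 hxC

lemma hit_singleton (ℱ : Finset (Finset ℕ)) :
    hit {2} ℱ = (ℱ.filter (fun A => 2 ∈ A)).card := by
  unfold hit
  congr 1
  apply Finset.filter_congr
  intro A _
  constructor
  · rintro ⟨x, hx⟩
    obtain ⟨h1, h2⟩ := Finset.mem_inter.mp hx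
    have : x = 2 := Finset.mem_singleton.mp h2
    exact this ▸ h1
  · intro h
    exact ⟨2, Finset.mem_inter.mpr ⟨h, Finset.mem_singleton_self 2⟩⟩

lemma card_filter_split (ℱ : Finset (Finset ℕ)) :
    (ℱ.filter (fun A => 2 ∈ A)).card =
      (ℱ.filter (fun A => 2 ∈ A ∧ 1 ∈ A)).card +
      (ℱ.filter (fun A => 2 ∈ A ∧ 1 ∉ A)).card := by
  have := Finset.card_filter_add_card_filter_not
    (s := ℱ.filter (fun A => 2 ∈ A)) (p := fun A => 1 ∈ A)
  rw [Finset.filter_filter, Finset.filter_filter] at this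
  omega

lemma hit_AHM3_eq {n r : ℕ} (hr : 3 ≤ r) :
    hit {2} (AHM n r 3) =
      ((chooseFam n r).filter (fun A => 2 ∈ A ∧ 1 ∈ A)).card +
      ((chooseFam n r).filter (fun A => 2 ∈ A ∧ 1 ∉ A ∧ 3 ∈ A)).card := by
  rw [hit_singleton, card_filter_split]
  congr 1
  · congr 1
    ext A
    simp only [Finset.mem_filter]
    constructor
    · rintro ⟨hA, h2, h1⟩
      exact ⟨((mem_AHM3 hr).mp hA).1, h2, h1⟩
    · rintro ⟨hA, h2, h1⟩
      refine ⟨(mem_AHM3 hr).mpr ⟨hA, ?_⟩, h2, h1⟩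
      have : 1 < (A.filter (fun z => z ≤ 3)).card :=
        Finset.one_lt_card.mpr ⟨1, Finset.mem_filter.mpr ⟨h1, by omega⟩,
          2, Finset.mem_filter.mpr ⟨h2, by omega⟩, by omega⟩
      unfold cnt; omega
  · congr 1
    ext A
    simp only [Finset.mem_filter]
    constructor
    · rintro ⟨hA, h2, h1⟩
      obtain ⟨hcf, hcnt⟩ := (mem_AHM3 hr).mp hA
      refine ⟨hcf, h2, h1, ?_⟩
      -- A has ≥ 2 elements ≤ 3, none is 1, all are ≥ 1, one of them is 3
      obtain ⟨x, hx, y, hy, hne⟩ := Finset.one_lt_card.mp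
        (show 1 < (A.filter (fun z => z ≤ 3)).card by unfold cnt at hcnt; omega)
      obtain ⟨hxA, hx3⟩ := Finset.mem_filter.mp hx
      obtain ⟨hyA, hy3⟩ := Finset.mem_filter.mp hy
      have hsub := (mem_chooseFam.mp hcf).1
      have hx1 : 1 ≤ x := (Finset.mem_Icc.mp (hsub hxA)).1
      have hy1 : 1 ≤ y := (Finset.mem_Icc.mp (hsub hyA)).1
      have hxne1 : x ≠ 1 := fun h => h1 (h ▸ hxA)
      have hyne1 : y ≠ 1 := fun h => h1 (h ▸ hyA)
      have : x = 3 ∨ y = 3 := by omega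
      rcases this with h | h
      · exact h ▸ hxA
      · exact h ▸ hyA
    · rintro ⟨hcf, h2, h1, h3⟩
      refine ⟨(mem_AHM3 hr).mpr ⟨hcf, ?_⟩, h2, h1⟩
      have : 1 < (A.filter (fun z => z ≤ 3)).card :=
        Finset.one_lt_card.mpr ⟨2, Finset.mem_filter.mpr ⟨h2, by omega⟩,
          3, Finset.mem_filter.mpr ⟨h3, by omega⟩, by omega⟩
      unfold cnt; omega

lemma F23_lower {n r : ℕ} (hr : 3 ≤ r) (hn : 2*r+1 ≤ n) :
    (n-3).choose (r-2) ≤ ((chooseFam n r).filter (fun A => 2 ∈ A ∧ 1 ∉ A ∧ 3 ∈ A)).card := by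
  have hkey : ∀ T ∈ (Finset.Icc 4 n).powersetCard (r-2), 2 ∉ T ∧ 3 ∉ T ∧ 1 ∉ T := by
    intro T hT
    obtain ⟨hTsub, _⟩ := Finset.mem_powersetCard.mp hT
    refine ⟨fun h => ?_, fun h => ?_, fun h => ?_⟩ <;>
      · have := Finset.mem_Icc.mp (hTsub h); omega
  calc (n-3).choose (r-2) = ((Finset.Icc 4 n).powersetCard (r-2)).card := by
        rw [Finset.card_powersetCard, Nat.card_Icc]
        have h4 : n + 1 - 4 = n - 3 := by omega
        rw [h4]
    _ ≤ _ := by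
        apply Finset.card_le_card_of_injOn (fun T => insert 2 (insert 3 T))
        · intro T hT
          obtain ⟨hTsub, hTcard⟩ := Finset.mem_powersetCard.mp hT
          obtain ⟨h2T, h3T, h1T⟩ := hkey T hT
          refine Finset.mem_filter.mpr ⟨?_, by simp, ?_, by simp⟩
          · rw [mem_chooseFam]
            constructor
            · intro x hx
              simp only [Finset.mem_insert] at hx
              rcases hx with h | h | h
              · simp only [Finset.mem_Icc]; omega
              · simp only [Finset.mem_Icc]; omega
              · have := Finset.mem_Icc.mp (hTsub h)
                simp only [Finset.mem_Icc]; omega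
            · rw [Finset.card_insert_of_notMem (by simp only [Finset.mem_insert]; tauto),
                Finset.card_insert_of_notMem h3T, hTcard]
              omega
          · simp only [Finset.mem_insert]
            push_neg
            exact ⟨by omega, by omega, h1T⟩
        · intro T1 hT1 T2 hT2 heq
          simp only [Finset.coe_mem, Finset.mem_coe] at hT1 hT2
          obtain ⟨h2T1, h3T1, _⟩ := hkey T1 hT1
          obtain ⟨h2T2, h3T2, _⟩ := hkey T2 hT2
          have e1 : ∀ T : Finset ℕ, 2 ∉ T → 3 ∉ T →
              ((insert 2 (insert 3 T)).erase 2).erase 3 = T := by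
            intro T h2T h3T
            rw [Finset.erase_insert (by simp only [Finset.mem_insert]; tauto),
              Finset.erase_insert h3T]
          rw [← e1 T1 h2T1 h3T1, ← e1 T2 h2T2 h3T2]
          simp only at heq
          rw [heq]

lemma T_upper {n r : ℕ} (hr : 3 ≤ r) (hn : 2*r+1 ≤ n) :
    ((chooseFam n r).filter (fun A => 2 ∈ A ∧ 1 ∉ A ∧ 3 ≤ cnt A (r+2))).card ≤
      r.choose 2 * (n-3).choose (r-3) := by
  set pairs := (Finset.Icc 3 (r+2)).powersetCard 2 with hpairs
  have hsub : (chooseFam n r).filter (fun A => 2 ∈ A ∧ 1 ∉ A ∧ 3 ≤ cnt A (r+2)) ⊆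
      pairs.biUnion (fun P => (chooseFam n r).filter (fun A => insert 2 P ⊆ A)) := by
    intro A hA
    obtain ⟨hAcf, h2, h1, hcnt⟩ := Finset.mem_filter.mp hA
    have hAsub := (mem_chooseFam.mp hAcf).1
    have hQ : 2 ≤ ((A.filter (fun x => x ≤ r+2)).erase 2).card := by
      have h2f : 2 ∈ A.filter (fun x => x ≤ r+2) := Finset.mem_filter.mpr ⟨h2, by omega⟩
      rw [Finset.card_erase_of_mem h2f]
      unfold cnt at hcnt
      omega
    obtain ⟨P, hPsub, hPcard⟩ := Finset.exists_subset_card_eq hQ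
    have hPIcc : P ⊆ Finset.Icc 3 (r+2) := by
      intro x hx
      have hx' := hPsub hx
      have hxne2 : x ≠ 2 := Finset.ne_of_mem_erase hx'
      have hx'' := Finset.mem_of_mem_erase hx'
      obtain ⟨hxA, hxr⟩ := Finset.mem_filter.mp hx''
      have hx1 : 1 ≤ x := (Finset.mem_Icc.mp (hAsub hxA)).1
      have hxne1 : x ≠ 1 := fun h => h1 (h ▸ hxA)
      simp only [Finset.mem_Icc]
      omega
    refine Finset.mem_biUnion.mpr ⟨P, Finset.mem_powersetCard.mpr ⟨hPIcc, hPcard⟩, ?_⟩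
    refine Finset.mem_filter.mpr ⟨hAcf, ?_⟩
    intro x hx
    rcases Finset.mem_insert.mp hx with h | h
    · exact h ▸ h2
    · exact (Finset.mem_filter.mp (Finset.mem_of_mem_erase (hPsub h))).1
  calc _ ≤ (pairs.biUnion (fun P => (chooseFam n r).filter (fun A => insert 2 P ⊆ A))).card :=
        Finset.card_le_card hsub
    _ ≤ ∑ P ∈ pairs, ((chooseFam n r).filter (fun A => insert 2 P ⊆ A)).card :=
        Finset.card_biUnion_le
    _ ≤ pairs.card * (n-3).choose (r-3) := by
        apply Finset.sum_le_card_nsmul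
        intro P hP
        obtain ⟨hPsub, hPcard⟩ := Finset.mem_powersetCard.mp hP
        have h2P : 2 ∉ P := fun h => by
          have := Finset.mem_Icc.mp (hPsub h); omega
        have hGcard : (insert 2 P).card = 3 := by
          rw [Finset.card_insert_of_notMem h2P, hPcard]
        have hGsub : insert 2 P ⊆ Finset.Icc 1 n := by
          intro x hx
          rcases Finset.mem_insert.mp hx with h | h
          · simp only [Finset.mem_Icc]; omega
          · have := Finset.mem_Icc.mp (hPsub h)
            simp only [Finset.mem_Icc]; omega
        calc ((chooseFam n r).filter (fun A => insert 2 P ⊆ A)).card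
            ≤ ((Finset.Icc 1 n \ insert 2 P).powersetCard (r-3)).card := by
              apply Finset.card_le_card_of_injOn (fun A => A \ insert 2 P)
              · intro A hA
                obtain ⟨hAcf, hGA⟩ := Finset.mem_filter.mp hA
                obtain ⟨hAsub, hAcard⟩ := mem_chooseFam.mp hAcf
                refine Finset.mem_powersetCard.mpr ⟨?_, ?_⟩
                · exact Finset.sdiff_subset_sdiff hAsub Finset.Subset.rfl
                · rw [Finset.card_sdiff_of_subset hGA, hAcard, hGcard]
              · intro A1 hA1 A2 hA2 heq
                simp only [Finset.mem_coe, Finset.mem_filter] at hA1 hA2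
                have e1 : A1 \ insert 2 P ∪ insert 2 P = A1 :=
                  Finset.sdiff_union_of_subset hA1.2
                have e2 : A2 \ insert 2 P ∪ insert 2 P = A2 :=
                  Finset.sdiff_union_of_subset hA2.2
                rw [← e1, ← e2]
                simp only at heq
                rw [heq]
            _ = (n-3).choose (r-3) := by
              rw [Finset.card_powersetCard, Finset.card_sdiff_of_subset hGsub, Nat.card_Icc, hGcard]
              have : n + 1 - 1 - 3 = n - 3 := by omega
              rw [this]
    _ = r.choose 2 * (n-3).choose (r-3) := by
        rw [hpairs, Finset.card_powersetCard, Nat.card_Icc]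
        have : r + 2 + 1 - 3 = r := by omega
        rw [this]

lemma choose_arith {n r : ℕ} (hr : 3 ≤ r) (hbig : r*r*r + 4*r + 10 ≤ n) :
    r.choose 2 * (n-3).choose (r-3) < (n-3).choose (r-2) := by
  have hid := Nat.choose_succ_right_eq (n-3) (r-3)
  have h1 : r - 3 + 1 = r - 2 := by omega
  rw [h1] at hid
  -- hid : (n-3).choose (r-2) * (r-2) = (n-3).choose (r-3) * (n - 3 - (r-3))
  have h2 : n - 3 - (r - 3) = n - r := by omega
  rw [h2] at hid
  have hc3pos : 0 < (n-3).choose (r-3) := Nat.choose_pos (by omega)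
  have hK : r.choose 2 * (r-2) < n - r := by
    have e1 : r.choose 2 ≤ r * r := by
      rw [Nat.choose_two_right]
      calc r * (r-1) / 2 ≤ r * (r-1) := Nat.div_le_self _ _
        _ ≤ r * r := Nat.mul_le_mul_left r (by omega)
    have e2 : r.choose 2 * (r-2) ≤ r * r * r := Nat.mul_le_mul e1 (by omega)
    have e3 : r * r * r < n - r := by omega
    omega
  have hmul : (r.choose 2 * (n-3).choose (r-3)) * (r-2) < ((n-3).choose (r-2)) * (r-2) := by
    rw [hid]
    calc (r.choose 2 * (n-3).choose (r-3)) * (r-2)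
        = (r.choose 2 * (r-2)) * (n-3).choose (r-3) := by ring
      _ < (n - r) * (n-3).choose (r-3) := by
          exact Nat.mul_lt_mul_of_lt_of_le hK le_rfl hc3pos
      _ = (n-3).choose (r-3) * (n - r) := by ring
  exact Nat.lt_of_mul_lt_mul_right hmul

lemma hit_lt {n r : ℕ} (hr : 3 ≤ r) (hn : r*r*r + 4*r + 10 ≤ n)
    {𝒜 : Finset (Finset ℕ)} (hM : IsMLCIF n r 𝒜) (hMt : Mtop n r ∉ 𝒜) :
    hit {2} 𝒜 < hit {2} (AHM n r 3) := by
  have hn' : 2*r+1 ≤ n := by omega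
  obtain ⟨C, hC, hC3⟩ := exists_C_of_Mtop_not_mem hr hn' hM hMt
  rw [hit_singleton, card_filter_split, hit_AHM3_eq hr]
  have hle1 : (𝒜.filter (fun A => 2 ∈ A ∧ 1 ∈ A)).card ≤
      ((chooseFam n r).filter (fun A => 2 ∈ A ∧ 1 ∈ A)).card :=
    Finset.card_le_card (Finset.filter_subset_filter _ hM.1.1)
  have hle2 : (𝒜.filter (fun A => 2 ∈ A ∧ 1 ∉ A)).card ≤
      ((chooseFam n r).filter (fun A => 2 ∈ A ∧ 1 ∉ A ∧ 3 ≤ cnt A (r+2))).card := by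
    apply Finset.card_le_card
    intro A hA
    obtain ⟨hA𝒜, h2, h1⟩ := Finset.mem_filter.mp hA
    exact Finset.mem_filter.mpr ⟨hM.1.1 hA𝒜, h2, h1,
      core_bound hr hn' hM.1 hC hC3 hA𝒜 h2 h1⟩
  have h3 := T_upper hr hn' (n := n)
  have h4 := F23_lower hr hn' (n := n)
  have h5 := choose_arith hr hn
  omega


/-- For `r ≥ 3` and `n` sufficiently large, for `X = {2}`,
`AHM_3` is optimal for `X`, and it is the unique MLCIF optimal for `X`. -/
theorem stmt0 :
    ∀ r : ℕ, 3 ≤ r → ∃ N : ℕ, ∀ n : ℕ, N ≤ n →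
      OptimalMLCIF n r {2} (AHM n r 3) ∧
      ∀ 𝒜 : Finset (Finset ℕ), OptimalMLCIF n r {2} 𝒜 → 𝒜 = AHM n r 3 := by
  intro r hr
  refine ⟨r*r*r + 4*r + 10, fun n hn => ?_⟩
  have hn' : 2*r+1 ≤ n := by omega
  have hH := AHM3_isMLCIF (n := n) hr hn'
  have hopt : OptimalMLCIF n r {2} (AHM n r 3) := by
    refine ⟨hH, fun ℬ hB => ?_⟩
    by_cases hMt : Mtop n r ∈ ℬ
    · rw [eq_AHM3_of_Mtop_mem hr hn' hB hMt]
    · exact le_of_lt (hit_lt hr hn hB hMt)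
  refine ⟨hopt, fun 𝒜 h𝒜 => ?_⟩
  by_cases hMt : Mtop n r ∈ 𝒜
  · exact eq_AHM3_of_Mtop_mem hr hn' h𝒜.1 hMt
  · have h1 := h𝒜.2 (AHM n r 3) hH
    have h2 := hit_lt hr hn h𝒜.1 hMt
    omega
end

section
/- For all integers r ≥ 3 there exists N such that for all n ≥ N the following holds: for every nonempty X ⊆ [2,n] such that X ≠ {2}, it is not the case that (|X| = 2 and X ∩ {2,3} ≠ ∅), it is not the case that (|X| = 3 and {2,3} ⊆ X), and X ⊄ [2,r+1], the star 𝒮 is the unique MLCIF in ([n] choose r) that is optimal for X. -/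
open Finset

section AuxLemmas

private lemma choose_succ_le (m j : ℕ) (h : 2*(j+1) ≤ m) :
    Nat.choose m j ≤ Nat.choose m (j+1) := by
  have hr := Nat.choose_succ_right_eq m j
  have h1 : Nat.choose m j * (j+1) ≤ Nat.choose m (j+1) * (j+1) := by
    rw [hr]
    have : j + 1 ≤ m - j := by omega
    exact Nat.mul_le_mul_left _ this
  exact Nat.le_of_mul_le_mul_right h1 (Nat.succ_pos j)

private lemma choose_lt_succ (m j : ℕ) (h : 2*(j+1) ≤ m) :
    Nat.choose m j < Nat.choose m (j+1) := by
  have hr := Nat.choose_succ_right_eq m j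
  have hpos : 0 < Nat.choose m j := Nat.choose_pos (by omega)
  have h1 : Nat.choose m j * (j+1) < Nat.choose m (j+1) * (j+1) := by
    rw [hr]
    have : j + 2 ≤ m - j := by omega
    calc Nat.choose m j * (j+1) < Nat.choose m j * (j+2) := by
          exact (Nat.mul_lt_mul_left hpos).mpr (by omega)
      _ ≤ Nat.choose m j * (m - j) := Nat.mul_le_mul_left _ this
  exact Nat.lt_of_mul_lt_mul_right h1

private lemma choose_mono2 (m : ℕ) {j j' : ℕ} (hjj : j' ≤ j) (h : 2*j ≤ m) :
    Nat.choose m j' ≤ Nat.choose m j := by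
  induction j with
  | zero =>
    have : j' = 0 := by omega
    simp [this]
  | succ k ih =>
    rcases Nat.lt_or_ge j' (k+1) with hlt | hge
    · exact le_trans (ih (by omega) (by omega)) (choose_succ_le m k (by omega))
    · have : j' = k+1 := by omega
      simp [this]

private lemma choose_double (m j : ℕ) (h : 2*j ≤ m) :
    Nat.choose (m+1) j ≤ 2 * Nat.choose m j := by
  cases j with
  | zero => simp
  | succ k =>
    rw [Nat.choose_succ_succ]
    have h2 := choose_succ_le m k h
    have : Nat.choose m k.succ = Nat.choose m (k+1) := rfl
    omega

private lemma choose_double_pow (m j d : ℕ) (h : 2*j ≤ m) :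
    Nat.choose (m+d) j ≤ 2^d * Nat.choose m j := by
  induction d with
  | zero => simp
  | succ e ih =>
    have h1 : Nat.choose (m+e+1) j ≤ 2 * Nat.choose (m+e) j :=
      choose_double (m+e) j (by omega)
    calc Nat.choose (m+(e+1)) j = Nat.choose (m+e+1) j := by ring_nf
      _ ≤ 2 * Nat.choose (m+e) j := h1
      _ ≤ 2 * (2^e * Nat.choose m j) := Nat.mul_le_mul_left _ ih
      _ = 2^(e+1) * Nat.choose m j := by ring

private lemma choose_le_two_pow (m j : ℕ) : Nat.choose m j ≤ 2^m := by
  rcases le_or_gt j m with h | h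
  · calc Nat.choose m j ≤ ∑ i ∈ range (m+1), Nat.choose m i :=
        Finset.single_le_sum (f := fun i => Nat.choose m i) (fun _ _ => Nat.zero_le _)
          (Finset.mem_range.mpr (by omega))
    _ = 2^m := Nat.sum_range_choose m
  · simp [Nat.choose_eq_zero_of_lt h]

private lemma sorted_get_count (A : Finset ℕ) (i : ℕ) (hA : i < (A.sort (· ≤ ·)).length) :
    i + 1 ≤ (A.filter (· ≤ (A.sort (· ≤ ·)).get ⟨i, hA⟩)).card := by
  have hmain := Finset.card_le_card_of_injOn
    (f := fun j : Fin (i+1) => (A.sort (· ≤ ·)).get ⟨j.1, lt_of_lt_of_le j.2 hA⟩)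
    (s := Finset.univ) (t := A.filter (· ≤ (A.sort (· ≤ ·)).get ⟨i, hA⟩)) ?_ ?_
  · simpa using hmain
  · intro j _
    rw [Finset.mem_coe, Finset.mem_filter]
    constructor
    · rw [← Finset.mem_sort (· ≤ ·)]
      exact List.get_mem _ _
    · exact (Finset.pairwise_sort A (· ≤ ·)).rel_get_of_le
        (by simp only [Fin.mk_le_mk]; omega)
  · intro j1 _ j2 _ heq
    beta_reduce at heq
    have := ((Finset.sort_nodup A (· ≤ ·)).get_inj_iff).mp heq
    exact Fin.ext (by simpa [Fin.mk.injEq] using this)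

private lemma count_sorted_get (B : Finset ℕ) (i : ℕ) (hB : i < (B.sort (· ≤ ·)).length)
    (m : ℕ) (h : i + 1 ≤ (B.filter (· ≤ m)).card) :
    (B.sort (· ≤ ·)).get ⟨i, hB⟩ ≤ m := by
  by_contra hlt
  push_neg at hlt
  have hle : (B.filter (· ≤ m)).card ≤ i := by
    have hcc := Finset.card_le_card_of_injOn (f := fun x => List.idxOf x (B.sort (· ≤ ·)))
      (s := B.filter (· ≤ m)) (t := Finset.range i) ?_ ?_
    · simpa using hcc
    · intro x hx
      rw [Finset.mem_coe, Finset.mem_filter] at hx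
      have hxl : x ∈ B.sort (· ≤ ·) := (Finset.mem_sort (· ≤ ·)).mpr hx.1
      have hidx : List.idxOf x (B.sort (· ≤ ·)) < (B.sort (· ≤ ·)).length :=
        List.idxOf_lt_length_iff.mpr hxl
      rw [Finset.mem_coe, Finset.mem_range]
      by_contra hge
      push_neg at hge
      have hmono : (B.sort (· ≤ ·)).get ⟨i, hB⟩ ≤
          (B.sort (· ≤ ·)).get ⟨List.idxOf x (B.sort (· ≤ ·)), hidx⟩ :=
        (Finset.pairwise_sort B (· ≤ ·)).rel_get_of_le (by simp only [Fin.mk_le_mk]; omega)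
      rw [List.idxOf_get] at hmono
      omega
    · intro x hx y hy heq
      rw [Finset.mem_coe, Finset.mem_filter] at hx hy
      have hxl : x ∈ B.sort (· ≤ ·) := (Finset.mem_sort (· ≤ ·)).mpr hx.1
      have hyl : y ∈ B.sort (· ≤ ·) := (Finset.mem_sort (· ≤ ·)).mpr hy.1
      have h1 := List.idxOf_get (List.idxOf_lt_length_iff.mpr hxl)
      have h2 := List.idxOf_get (List.idxOf_lt_length_iff.mpr hyl)
      rw [← h1, ← h2]
      congr 1
      exact Fin.ext (by simpa using heq)
  omega

lemma domLE_of_counts {B A : Finset ℕ} (hcard : B.card = A.card)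
    (h : ∀ m, (A.filter (· ≤ m)).card ≤ (B.filter (· ≤ m)).card) : DomLE B A := by
  refine ⟨hcard, ?_⟩
  intro i hB hA
  exact count_sorted_get B i hB _ (le_trans (sorted_get_count A i hA) (h _))

lemma card_filter_IO (n r : ℕ) (I O : Finset ℕ) (hI : I ⊆ Finset.Icc 1 n)
    (hO : O ⊆ Finset.Icc 1 n) (hd : Disjoint I O) (hIr : I.card ≤ r) :
    ((chooseFam n r).filter (fun A => I ⊆ A ∧ Disjoint A O)).card
      = Nat.choose (n - I.card - O.card) (r - I.card) := by
  have hIO : I ∪ O ⊆ Finset.Icc 1 n := Finset.union_subset hI hO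
  have hcard_amb : (Finset.Icc 1 n \ (I ∪ O)).card = n - I.card - O.card := by
    rw [Finset.card_sdiff_of_subset hIO, Finset.card_union_of_disjoint hd, Nat.card_Icc]
    omega
  rw [← hcard_amb, ← Finset.card_powersetCard (r - I.card) (Finset.Icc 1 n \ (I ∪ O))]
  apply Finset.card_bij' (i := fun A _ => A \ I) (j := fun S _ => S ∪ I)
  · intro A hA
    rw [Finset.mem_filter, mem_chooseFam] at hA
    obtain ⟨⟨hsub, hcard⟩, hIA, hAO⟩ := hA
    rw [Finset.mem_powersetCard]
    constructor
    · intro x hx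
      rw [Finset.mem_sdiff] at hx
      rw [Finset.mem_sdiff, Finset.mem_union]
      exact ⟨hsub hx.1, fun h => h.elim hx.2 (fun hxO => (Finset.disjoint_left.mp hAO) hx.1 hxO)⟩
    · rw [Finset.card_sdiff_of_subset hIA, hcard]
  · intro S hS
    rw [Finset.mem_powersetCard] at hS
    obtain ⟨hsub, hcard⟩ := hS
    have hSI : Disjoint S I := by
      rw [Finset.disjoint_left]
      intro x hx hxc
      have := hsub hx
      rw [Finset.mem_sdiff, Finset.mem_union] at this
      exact this.2 (Or.inl hxc)
    have hSO : Disjoint S O := by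
      rw [Finset.disjoint_left]
      intro x hx hxc
      have := hsub hx
      rw [Finset.mem_sdiff, Finset.mem_union] at this
      exact this.2 (Or.inr hxc)
    rw [Finset.mem_filter, mem_chooseFam]
    refine ⟨⟨?_, ?_⟩, Finset.subset_union_right, ?_⟩
    · exact Finset.union_subset (fun x hx => (Finset.mem_sdiff.mp (hsub hx)).1) hI
    · rw [Finset.card_union_of_disjoint hSI, hcard]
      omega
    · exact Finset.disjoint_union_left.mpr ⟨hSO, hd⟩
  · intro A hA
    rw [Finset.mem_filter] at hA
    exact Finset.sdiff_union_of_subset hA.2.1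
  · intro S hS
    rw [Finset.mem_powersetCard] at hS
    apply Finset.union_sdiff_cancel_right
    rw [Finset.disjoint_left]
    intro x hx hxc
    have := hS.1 hx
    rw [Finset.mem_sdiff, Finset.mem_union] at this
    exact this.2 (Or.inl hxc)

-- abbreviations: for A ⊆ Icc 1 n, window part = filter (· ≤ m)
private lemma filter_split_card (A : Finset ℕ) (m : ℕ) :
    (A.filter (· ≤ m)).card + (A.filter (fun x => ¬ x ≤ m)).card = A.card :=
  Finset.card_filter_add_card_filter_not _

private lemma filter_le_card_split (A : Finset ℕ) (m j : ℕ) :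
    (A.filter (· ≤ j)).card = ((A.filter (· ≤ m)).filter (· ≤ j)).card
      + ((A.filter (fun x => ¬ x ≤ m)).filter (· ≤ j)).card := by
  rw [Finset.filter_comm (· ≤ m) (· ≤ j), Finset.filter_comm (fun x => ¬ x ≤ m) (· ≤ j)]
  exact (Finset.card_filter_add_card_filter_not (s := A.filter (· ≤ j))
    (p := (· ≤ m))).symm

/-- Swap the window part of a member for a dominating one, keeping the tail. -/
private lemma swap_window_mem {n r m : ℕ} {𝒜 : Finset (Finset ℕ)} (hLC : IsLCIF n r 𝒜)
    {A : Finset ℕ} (hA : A ∈ 𝒜) (T' : Finset ℕ) (hT'sub : T' ⊆ Finset.Icc 1 m)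
    (hT'card : T'.card = (A.filter (· ≤ m)).card)
    (hcnt : ∀ j, ((A.filter (· ≤ m)).filter (· ≤ j)).card ≤ (T'.filter (· ≤ j)).card)
    (hmn : m ≤ n) :
    T' ∪ (A.filter (fun x => ¬ x ≤ m)) ∈ 𝒜 := by
  obtain ⟨hsubF, hint, hlc⟩ := hLC
  have hAcf := hsubF hA
  rw [mem_chooseFam] at hAcf
  obtain ⟨hAsub, hAcard⟩ := hAcf
  set T : Finset ℕ := A.filter (· ≤ m) with hT
  set H : Finset ℕ := A.filter (fun x => ¬ x ≤ m) with hH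
  have hTH : Disjoint T' H := by
    rw [Finset.disjoint_left]
    intro x hx hx2
    have h1 : x ≤ m := (Finset.mem_Icc.mp (hT'sub hx)).2
    have h2 : ¬ x ≤ m := (Finset.mem_filter.mp hx2).2
    exact h2 h1
  have hBcard : (T' ∪ H).card = r := by
    rw [Finset.card_union_of_disjoint hTH, hT'card]
    rw [← hAcard]
    exact filter_split_card A m
  have hBmem : T' ∪ H ∈ chooseFam n r := by
    rw [mem_chooseFam]
    refine ⟨Finset.union_subset ?_ ?_, hBcard⟩
    · exact hT'sub.trans (Finset.Icc_subset_Icc_right hmn)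
    · exact (Finset.filter_subset _ _).trans hAsub
  refine hlc A hA _ hBmem ?_
  apply domLE_of_counts (by rw [hBcard, hAcard])
  intro j
  rw [filter_le_card_split A m j, Finset.filter_union,
    Finset.card_union_of_disjoint (Finset.disjoint_filter_filter hTH)]
  rcases le_or_gt j m with hjm | hjm
  · have hHj : H.filter (· ≤ j) = ∅ := by
      rw [Finset.filter_eq_empty_iff]
      intro x hx
      have := (Finset.mem_filter.mp hx).2
      omega
    rw [hHj]
    simp only [Finset.card_empty, Nat.add_zero]
    exact hcnt j
  · have h1 : T.filter (· ≤ j) = T := by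
      apply Finset.filter_true_of_mem
      intro x hx
      have := (Finset.mem_filter.mp hx).2
      omega
    have h2 : T'.filter (· ≤ j) = T' := by
      apply Finset.filter_true_of_mem
      intro x hx
      have := (Finset.mem_Icc.mp (hT'sub hx)).2
      omega
    rw [h1, h2, hT'card]

/-- Compress a member entirely into the window `[1, m]`. -/
private lemma compress_all_mem {n r m : ℕ} {𝒜 : Finset (Finset ℕ)} (hLC : IsLCIF n r 𝒜)
    {A : Finset ℕ} (hA : A ∈ 𝒜) (S : Finset ℕ) (hSsub : S ⊆ Finset.Icc 1 m)
    (hdisj : Disjoint S (A.filter (· ≤ m)))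
    (hcard : (A.filter (· ≤ m)).card + S.card = r) (hmn : m ≤ n) :
    (A.filter (· ≤ m)) ∪ S ∈ 𝒜 := by
  obtain ⟨hsubF, hint, hlc⟩ := hLC
  have hAcf := hsubF hA
  rw [mem_chooseFam] at hAcf
  obtain ⟨hAsub, hAcard⟩ := hAcf
  set T : Finset ℕ := A.filter (· ≤ m) with hT
  have hBcard : (T ∪ S).card = r := by
    rw [Finset.card_union_of_disjoint hdisj.symm]
    exact hcard
  have hTIcc : T ⊆ Finset.Icc 1 m := by
    intro x hx
    rw [Finset.mem_filter] at hx
    have := Finset.mem_Icc.mp (hAsub hx.1)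
    rw [Finset.mem_Icc]
    exact ⟨this.1, hx.2⟩
  have hBsub : T ∪ S ⊆ Finset.Icc 1 m := Finset.union_subset hTIcc hSsub
  have hBmem : T ∪ S ∈ chooseFam n r := by
    rw [mem_chooseFam]
    exact ⟨hBsub.trans (Finset.Icc_subset_Icc_right hmn), hBcard⟩
  refine hlc A hA _ hBmem ?_
  apply domLE_of_counts (by rw [hBcard, hAcard])
  intro j
  rcases le_or_gt j m with hjm | hjm
  · calc (A.filter (· ≤ j)).card = (T.filter (· ≤ j)).card := by
          congr 1
          rw [hT, Finset.filter_comm]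
          apply (Finset.filter_true_of_mem ?_).symm
          intro x hx
          have := (Finset.mem_filter.mp hx).2
          omega
      _ ≤ (((T ∪ S)).filter (· ≤ j)).card :=
          Finset.card_le_card (Finset.filter_subset_filter _ Finset.subset_union_left)
  · have h2 : (T ∪ S).filter (· ≤ j) = T ∪ S := by
      apply Finset.filter_true_of_mem
      intro x hx
      have := (Finset.mem_Icc.mp (hBsub hx)).2
      omega
    rw [h2, hBcard, ← hAcard]
    exact Finset.card_filter_le _ _

/-- The window lemma: two members of an LCIF must meet within `[1, 2r]`. -/
private lemma window_lemma {n r : ℕ} (hn : 2*r ≤ n) {𝒜 : Finset (Finset ℕ)}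
    (hLC : IsLCIF n r 𝒜) {A B : Finset ℕ} (hA : A ∈ 𝒜) (hB : B ∈ 𝒜) :
    ∃ x, x ∈ A ∧ x ∈ B ∧ x ≤ 2*r := by
  by_contra hcon
  push_neg at hcon
  have hAcf := mem_chooseFam.mp (hLC.1 hA)
  have hBcf := mem_chooseFam.mp (hLC.1 hB)
  set TA : Finset ℕ := A.filter (· ≤ 2*r) with hTA
  set TB : Finset ℕ := B.filter (· ≤ 2*r) with hTB
  have hdAB : Disjoint TA TB := by
    rw [Finset.disjoint_left]
    intro x hx hx'
    rw [Finset.mem_filter] at hx hx'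
    have := hcon x hx.1 hx'.1
    have := hx.2
    have := hx'.2
    omega
  have hTAIcc : TA ⊆ Finset.Icc 1 (2*r) := by
    intro x hx
    rw [Finset.mem_filter] at hx
    rw [Finset.mem_Icc]
    exact ⟨(Finset.mem_Icc.mp (hAcf.1 hx.1)).1, hx.2⟩
  have hTBIcc : TB ⊆ Finset.Icc 1 (2*r) := by
    intro x hx
    rw [Finset.mem_filter] at hx
    rw [Finset.mem_Icc]
    exact ⟨(Finset.mem_Icc.mp (hBcf.1 hx.1)).1, hx.2⟩
  set free : Finset ℕ := Finset.Icc 1 (2*r) \ (TA ∪ TB) with hfree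
  have hfreecard : free.card = 2*r - TA.card - TB.card := by
    rw [hfree, Finset.card_sdiff_of_subset (Finset.union_subset hTAIcc hTBIcc),
      Finset.card_union_of_disjoint hdAB, Nat.card_Icc]
    omega
  have hTAr : TA.card ≤ r := by
    rw [← hAcf.2]; exact Finset.card_filter_le _ _
  have hTBr : TB.card ≤ r := by
    rw [← hBcf.2]; exact Finset.card_filter_le _ _
  obtain ⟨SA, hSAsub, hSAcard⟩ : ∃ SA ⊆ free, SA.card = r - TA.card :=
    Finset.exists_subset_card_eq (by omega)
  set SB : Finset ℕ := free \ SA with hSB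
  have hSBcard : SB.card = r - TB.card := by
    rw [hSB, Finset.card_sdiff_of_subset hSAsub]
    omega
  have hfreeIcc : free ⊆ Finset.Icc 1 (2*r) := Finset.sdiff_subset
  have hfreeTA : Disjoint free TA := by
    rw [Finset.disjoint_left]
    intro x hx hx'
    rw [hfree, Finset.mem_sdiff, Finset.mem_union] at hx
    exact hx.2 (Or.inl hx')
  have hfreeTB : Disjoint free TB := by
    rw [Finset.disjoint_left]
    intro x hx hx'
    rw [hfree, Finset.mem_sdiff, Finset.mem_union] at hx
    exact hx.2 (Or.inr hx')
  have hA' : TA ∪ SA ∈ 𝒜 := by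
    apply compress_all_mem hLC hA SA (hSAsub.trans hfreeIcc)
      (Finset.disjoint_of_subset_left hSAsub hfreeTA)
      (show TA.card + SA.card = r by omega) hn
  have hB' : TB ∪ SB ∈ 𝒜 := by
    apply compress_all_mem hLC hB SB ((Finset.sdiff_subset).trans hfreeIcc)
      (Finset.disjoint_of_subset_left (Finset.sdiff_subset) hfreeTB)
      (show TB.card + SB.card = r by omega) hn
  have hinter := hLC.2.1 _ hA' _ hB'
  obtain ⟨x, hx⟩ := hinter
  rw [Finset.mem_inter, Finset.mem_union, Finset.mem_union] at hx
  obtain ⟨hx1, hx2⟩ := hx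
  rcases hx1 with h1 | h1 <;> rcases hx2 with h2 | h2
  · exact (Finset.disjoint_left.mp hdAB) h1 h2
  · exact (Finset.disjoint_left.mp hfreeTA) (Finset.sdiff_subset h2) h1
  · exact (Finset.disjoint_left.mp hfreeTB) (hSAsub h1) h2
  · exact (Finset.mem_sdiff.mp h2).2 h1

private lemma mem_starFam {n r : ℕ} {A : Finset ℕ} :
    A ∈ starFam n r ↔ A ∈ chooseFam n r ∧ 1 ∈ A := Finset.mem_filter

private lemma star_isLCIF {n r : ℕ} (hr : 1 ≤ r) : IsLCIF n r (starFam n r) := by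
  refine ⟨Finset.filter_subset _ _, ?_, ?_⟩
  · intro A hA B hB
    exact ⟨1, Finset.mem_inter.mpr ⟨(mem_starFam.mp hA).2, (mem_starFam.mp hB).2⟩⟩
  · intro A hA B hBcf hdom
    rw [mem_starFam] at hA ⊢
    refine ⟨hBcf, ?_⟩
    obtain ⟨hAcf, h1A⟩ := hA
    have hAcard := (mem_chooseFam.mp hAcf).2
    have hBcard := (mem_chooseFam.mp hBcf).2
    have hlenA : 0 < (A.sort (· ≤ ·)).length := by
      rw [Finset.length_sort]; omega
    have hlenB : 0 < (B.sort (· ≤ ·)).length := by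
      have hBA := hdom.1
      rw [Finset.length_sort]; omega
    have hget := hdom.2 0 hlenB hlenA
    have hA0 : (A.sort (· ≤ ·)).get ⟨0, hlenA⟩ ≤ 1 := by
      have hmin : (A.sort (· ≤ ·)).get ⟨0, hlenA⟩ = A.min' ⟨1, h1A⟩ :=
        Finset.sorted_zero_eq_min' (h := hlenA)
      rw [hmin]
      exact Finset.min'_le A 1 h1A
    have hB0mem : (B.sort (· ≤ ·)).get ⟨0, hlenB⟩ ∈ B := by
      rw [← Finset.mem_sort (· ≤ ·)]
      exact List.get_mem _ _
    have hB0ge : 1 ≤ (B.sort (· ≤ ·)).get ⟨0, hlenB⟩ :=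
      (Finset.mem_Icc.mp ((mem_chooseFam.mp hBcf).1 hB0mem)).1
    have : (B.sort (· ≤ ·)).get ⟨0, hlenB⟩ = 1 := by omega
    rw [← this]
    exact hB0mem

private lemma star_exists_disjoint {n r : ℕ} (hr : 1 ≤ r) (hn : 2*r ≤ n)
    {B : Finset ℕ} (hB : B ∈ chooseFam n r) (h1B : 1 ∉ B) :
    ∃ S ∈ starFam n r, S ∩ B = ∅ := by
  obtain ⟨hBsub, hBcard⟩ := mem_chooseFam.mp hB
  have hcard : r - 1 ≤ (Finset.Icc 1 n \ insert 1 B).card := by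
    have h1 : (insert 1 B).card = r + 1 := by
      rw [Finset.card_insert_of_notMem h1B, hBcard]
    have hsub : insert 1 B ⊆ Finset.Icc 1 n := by
      apply Finset.insert_subset _ hBsub
      rw [Finset.mem_Icc]; omega
    rw [Finset.card_sdiff_of_subset hsub, h1, Nat.card_Icc]
    omega
  obtain ⟨S0, hS0sub, hS0card⟩ := Finset.exists_subset_card_eq hcard
  have h1S0 : 1 ∉ S0 := fun h => by
    have := hS0sub h
    rw [Finset.mem_sdiff] at this
    exact this.2 (Finset.mem_insert_self 1 B)
  refine ⟨insert 1 S0, ?_, ?_⟩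
  · rw [mem_starFam, mem_chooseFam]
    refine ⟨⟨?_, ?_⟩, Finset.mem_insert_self 1 S0⟩
    · apply Finset.insert_subset
      · rw [Finset.mem_Icc]; omega
      · exact hS0sub.trans Finset.sdiff_subset
    · rw [Finset.card_insert_of_notMem h1S0, hS0card]
      omega
  · rw [Finset.eq_empty_iff_forall_notMem]
    intro x hx
    rw [Finset.mem_inter, Finset.mem_insert] at hx
    obtain ⟨hx1 | hx1, hx2⟩ := hx
    · rw [hx1] at hx2; exact h1B hx2
    · have := hS0sub hx1
      rw [Finset.mem_sdiff] at this
      exact this.2 (Finset.mem_insert_of_mem hx2)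

private lemma star_isMLCIF {n r : ℕ} (hr : 1 ≤ r) (hn : 2*r ≤ n) :
    IsMLCIF n r (starFam n r) := by
  refine ⟨star_isLCIF hr, ?_⟩
  intro ℬ hB hsub
  apply Finset.Subset.antisymm _ hsub
  intro B hBmem
  by_contra hBnot
  have hBcf : B ∈ chooseFam n r := hB.1 hBmem
  have h1B : 1 ∉ B := fun h => hBnot (mem_starFam.mpr ⟨hBcf, h⟩)
  obtain ⟨S, hS, hSB⟩ := star_exists_disjoint hr hn hBcf h1B
  have := hB.2.1 S (hsub hS) B hBmem
  rw [hSB] at this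
  exact Finset.not_nonempty_empty this

private lemma exists_nonstar_mem {n r : ℕ} {𝒜 : Finset (Finset ℕ)}
    (h𝒜 : IsMLCIF n r 𝒜) (hne : 𝒜 ≠ starFam n r) (hr : 1 ≤ r) :
    ∃ A ∈ 𝒜, 1 ∉ A := by
  by_contra hcon
  push_neg at hcon
  have hsub : 𝒜 ⊆ starFam n r := by
    intro A hA
    exact mem_starFam.mpr ⟨h𝒜.1.1 hA, hcon A hA⟩
  exact hne ((h𝒜.2 (starFam n r) (star_isLCIF hr) hsub).symm)

private lemma choose_twice {a u : ℕ} (h : 3*u+3 ≤ a) :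
    2 * Nat.choose a u < Nat.choose a (u+1) := by
  have hr := Nat.choose_succ_right_eq a u
  have hpos : 0 < Nat.choose a u := Nat.choose_pos (by omega)
  have h1 : 2 * Nat.choose a u * (u+1) < Nat.choose a (u+1) * (u+1) := by
    rw [hr]
    have h2 : 2*(u+1)+1 ≤ a - u := by omega
    calc 2 * Nat.choose a u * (u+1) = Nat.choose a u * (2*(u+1)) := by ring
      _ < Nat.choose a u * (2*(u+1)+1) := (Nat.mul_lt_mul_left hpos).mpr (by omega)
      _ ≤ Nat.choose a u * (a - u) := Nat.mul_le_mul_left _ h2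
  exact Nat.lt_of_mul_lt_mul_right h1

private lemma choose_big_gap {m j K : ℕ} (h1 : j ≤ m) (h2 : K * (j+1) < m - j) :
    K * Nat.choose m j < Nat.choose m (j+1) := by
  have hrat := Nat.choose_succ_right_eq m j
  have hCpos : 0 < Nat.choose m j := Nat.choose_pos h1
  have hmul : K * Nat.choose m j * (j+1) < Nat.choose m (j+1) * (j+1) := by
    rw [hrat]
    calc K * Nat.choose m j * (j+1) = Nat.choose m j * (K*(j+1)) := by ring
      _ < Nat.choose m j * (m - j) := (Nat.mul_lt_mul_left hCpos).mpr h2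
  exact Nat.lt_of_mul_lt_mul_right hmul

/-- basic consequences of `n` being large. -/
private lemma n_large {r n : ℕ} (hr : 3 ≤ r) (hn : 2^(2*r+6)*(r+1)^4 ≤ n) :
    2^(2*r+6) ≤ n ∧ 8*r + 40 ≤ n := by
  have h0 : (1:ℕ) ≤ (r+1)^4 := Nat.one_le_pow 4 (r+1) (by omega)
  have h1 : (2:ℕ)^(2*r+6) ≤ 2^(2*r+6)*(r+1)^4 := Nat.le_mul_of_pos_right _ (by omega)
  have h2 : 2*r+2 < 2^(2*r+2) := Nat.lt_two_pow_self
  have h3 : (2:ℕ)^(2*r+6) = 2^(2*r+2)*16 := by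
    rw [show 2*r+6 = (2*r+2)+4 by omega, pow_add]
    norm_num
  omega

/-- Inequality for the rank ≥ 3 case. -/
private lemma ineq1 {r n k : ℕ} (hr : 3 ≤ r) (hk3 : 3 ≤ k) (hkr : k ≤ r)
    (hn : 2^(2*r+6)*(r+1)^4 ≤ n) :
    Nat.choose (2*r-1) 3 * Nat.choose (n-3) (r-3) < Nat.choose (n-2-k) (r-2) := by
  obtain ⟨hnbig, hn4r⟩ := n_large hr hn
  -- numeric core
  have e1 : Nat.choose (2*r-1) 3 ≤ (2*r)^3 := by
    have a1 : Nat.choose (2*r-1) 3 ≤ (2*r-1)^3 := Nat.choose_le_pow (2*r-1) 3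
    have a2 : (2*r-1)^3 ≤ (2*r)^3 := Nat.pow_le_pow_left (by omega) 3
    omega
  have hnum : Nat.choose (2*r-1) 3 * 2^(r-1) * (r-2) + 2*r + 2 ≤ n := by
    have e2 : Nat.choose (2*r-1) 3 * 2^(r-1) * (r-2) ≤ (2*r)^3 * 2^(r-1) * r :=
      Nat.mul_le_mul (Nat.mul_le_mul e1 (le_refl ((2:ℕ)^(r-1)))) (show r-2 ≤ r by omega)
    have e3 : (2*r)^3 * 2^(r-1) * r = 2^3 * 2^(r-1) * r^4 := by ring
    have e4 : (2:ℕ)^3 * 2^(r-1) = 2^(r+2) := by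
      rw [← pow_add]
      congr 1
      omega
    have e5 : (2:ℕ)^3 * 2^(r-1) * r^4 ≤ 2^(2*r+5) * (r+1)^4 := by
      rw [e4]
      exact Nat.mul_le_mul (Nat.pow_le_pow_right (by omega) (by omega))
        (Nat.pow_le_pow_left (by omega) 4)
    have e6 : 2*r + 2 ≤ 2^(2*r+5) * (r+1)^4 := by
      have g1 : 2*r+2 ≤ (r+1)^4 := by nlinarith
      have g2 : (1:ℕ) ≤ 2^(2*r+5) := Nat.one_le_pow _ _ (by omega)
      have g3 : (r+1)^4 ≤ 2^(2*r+5) * (r+1)^4 := Nat.le_mul_of_pos_left _ (by omega)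
      omega
    have e7 : (2:ℕ)^(2*r+5) * (r+1)^4 + 2^(2*r+5) * (r+1)^4 = 2^(2*r+6)*(r+1)^4 := by
      rw [show 2*r+6 = (2*r+5)+1 from by omega, pow_succ]
      ring
    omega
  -- step 1 : C(n-3, r-3) ≤ 2^(r-1) * C(n-r-2, r-3)
  have s1 : Nat.choose (n-3) (r-3) ≤ 2^(r-1) * Nat.choose (n-r-2) (r-3) := by
    have harith : n - 3 = (n-r-2) + (r-1) := by omega
    rw [harith]
    exact choose_double_pow (n-r-2) (r-3) (r-1) (by omega)
  -- step 2
  have s2 : Nat.choose (2*r-1) 3 * 2^(r-1) * Nat.choose (n-r-2) (r-3)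
      < Nat.choose (n-r-2) ((r-3)+1) := by
    apply choose_big_gap (by omega)
    have hbridge : Nat.choose (2*r-1) 3 * 2^(r-1) * ((r-3)+1)
        = Nat.choose (2*r-1) 3 * 2^(r-1) * (r-2) := by
      congr 1
      omega
    omega
  have s3 : Nat.choose (n-r-2) ((r-3)+1) = Nat.choose (n-r-2) (r-2) := by
    congr 1
    omega
  calc Nat.choose (2*r-1) 3 * Nat.choose (n-3) (r-3)
      ≤ Nat.choose (2*r-1) 3 * (2^(r-1) * Nat.choose (n-r-2) (r-3)) :=
        Nat.mul_le_mul_left _ s1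
    _ = Nat.choose (2*r-1) 3 * 2^(r-1) * Nat.choose (n-r-2) (r-3) := by ring
    _ < Nat.choose (n-r-2) ((r-3)+1) := s2
    _ = Nat.choose (n-r-2) (r-2) := s3
    _ ≤ Nat.choose (n-2-k) (r-2) := Nat.choose_le_choose _ (by omega)

private lemma pascal (m k : ℕ) :
    Nat.choose (m+1) (k+1) = Nat.choose m k + Nat.choose m (k+1) :=
  Nat.choose_succ_succ' m k

private lemma ineq2_abs_big (u : ℕ) : ∀ b, 2*u+7 ≤ b → ∀ a, b < a →
    Nat.choose a (u+1) + Nat.choose b (u+2) < Nat.choose a (u+2) + Nat.choose b (u+1) := by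
  intro b hb a hab
  induction a, hab using Nat.le_induction with
  | base =>
    have p1 : Nat.choose (b+1) (u+2) = Nat.choose b (u+1) + Nat.choose b (u+2) :=
      pascal b (u+1)
    have p2 : Nat.choose (b+1) (u+1) = Nat.choose b u + Nat.choose b (u+1) :=
      pascal b u
    have h3 : Nat.choose b u < Nat.choose b (u+1) := choose_lt_succ b u (by omega)
    simp only [Nat.succ_eq_add_one]
    omega
  | succ a ha ih =>
    have p1 : Nat.choose (a+1) (u+2) = Nat.choose a (u+1) + Nat.choose a (u+2) :=
      pascal a (u+1)
    have p2 : Nat.choose (a+1) (u+1) = Nat.choose a u + Nat.choose a (u+1) :=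
      pascal a u
    have h3 : Nat.choose a u ≤ Nat.choose a (u+1) := choose_succ_le a u (by omega)
    try simp only [Nat.succ_eq_add_one]
    omega

private lemma ineq2_abs_small (u a b : ℕ) (hb : b ≤ 2*u+6) (ha1 : 2^(2*u+6) ≤ a)
    (ha2 : 3*(u+1)+3 ≤ a) :
    Nat.choose a (u+1) + Nat.choose b (u+2) < Nat.choose a (u+2) + Nat.choose b (u+1) := by
  have h1 : Nat.choose b (u+2) ≤ 2^(2*u+6) := by
    calc Nat.choose b (u+2) ≤ 2^b := choose_le_two_pow b (u+2)
      _ ≤ 2^(2*u+6) := Nat.pow_le_pow_right (by omega) hb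
  have h2 : 2 * Nat.choose a (u+1) < Nat.choose a (u+2) := choose_twice ha2
  have h3 : a ≤ Nat.choose a (u+1) := by
    have := choose_mono2 a (j := u+1) (j' := 1) (by omega) (by omega)
    simpa [Nat.choose_one_right] using this
  omega

private lemma ineq2 {r n q : ℕ} (hr : 3 ≤ r) (hn : 2^(2*r+6)*(r+1)^4 ≤ n) (hq : 1 ≤ q) :
    Nat.choose (n-3) (r-2) + Nat.choose (n-3-q) (r-1)
      < Nat.choose (n-3) (r-1) + Nat.choose (n-3-q) (r-2) := by
  obtain ⟨hnbig, hn4r⟩ := n_large hr hn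
  have hrw1 : r - 1 = (r-3) + 2 := by omega
  have hrw2 : r - 2 = (r-3) + 1 := by omega
  rw [hrw1, hrw2]
  rcases le_or_gt (n-3-q) (2*(r-3)+6) with hsm | hbg
  · apply ineq2_abs_small (r-3) (n-3) (n-3-q) hsm ?_ (by omega)
    have hmono : (2:ℕ)^(2*(r-3)+6) * 4 ≤ 2^(2*r+6) := by
      calc (2:ℕ)^(2*(r-3)+6) * 4 = 2^(2*(r-3)+6+2) := by rw [pow_add 2 (2*(r-3)+6) 2]; norm_num
        _ ≤ 2^(2*r+6) := Nat.pow_le_pow_right (by omega) (by omega)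
    have hone : (1:ℕ) ≤ 2^(2*(r-3)+6) := Nat.one_le_pow _ _ (by omega)
    omega
  · exact ineq2_abs_big (r-3) (n-3-q) (by omega) (n-3) (by omega)

private lemma ineq3 {r n q : ℕ} (hr : 3 ≤ r) (hn : 2^(2*r+6)*(r+1)^4 ≤ n) (hq : 2 ≤ q) :
    Nat.choose (n-3) (r-2) + Nat.choose (n-3-q) (r-1) < Nat.choose (n-3) (r-1) := by
  obtain ⟨hnbig, hn4r⟩ := n_large hr hn
  have hmono : Nat.choose (n-3-q) (r-1) ≤ Nat.choose (n-5) (r-1) :=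
    Nat.choose_le_choose _ (by omega)
  have key : Nat.choose (n-3) (r-2) + Nat.choose (n-5) (r-1) < Nat.choose (n-3) (r-1) := by
    have hrw1 : r - 1 = (r-3) + 2 := by omega
    have hrw2 : r - 2 = (r-3) + 1 := by omega
    have hc2 : n - 3 = (n-5) + 2 := by omega
    rw [hrw1, hrw2, hc2]
    have p1 : Nat.choose (n-5+2) ((r-3)+2)
        = Nat.choose (n-5+1) ((r-3)+1) + Nat.choose (n-5+1) ((r-3)+2) :=
      pascal (n-5+1) ((r-3)+1)
    have p2 : Nat.choose (n-5+1) ((r-3)+2)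
        = Nat.choose (n-5) ((r-3)+1) + Nat.choose (n-5) ((r-3)+2) :=
      pascal (n-5) ((r-3)+1)
    have p3 : Nat.choose (n-5+2) ((r-3)+1)
        = Nat.choose (n-5+1) (r-3) + Nat.choose (n-5+1) ((r-3)+1) :=
      pascal (n-5+1) (r-3)
    have h4 : Nat.choose (n-5+1) (r-3) ≤ 2 * Nat.choose (n-5) (r-3) :=
      choose_double (n-5) (r-3) (by omega)
    have h5 : 2 * Nat.choose (n-5) (r-3) < Nat.choose (n-5) ((r-3)+1) :=
      choose_twice (by omega)
    omega
  omega

private lemma tail_filter_empty (A : Finset ℕ) (m : ℕ) :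
    (A.filter (fun x => ¬ x ≤ m)).filter (· ≤ m) = ∅ := by
  rw [Finset.filter_eq_empty_iff]
  intro x hx
  exact (Finset.mem_filter.mp hx).2

private lemma trace_shift {n r : ℕ} {𝒜 : Finset (Finset ℕ)} (hLC : IsLCIF n r 𝒜)
    (hr : 1 ≤ r) (hn : 2*r ≤ n) {A : Finset ℕ} (hA : A ∈ 𝒜) (h1A : 1 ∉ A) :
    ∃ A₀ ∈ 𝒜, A₀.filter (· ≤ 2*r) = Finset.Icc 2 ((A.filter (· ≤ 2*r)).card + 1) := by
  have hAcf := mem_chooseFam.mp (hLC.1 hA)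
  set k := (A.filter (· ≤ 2*r)).card with hk
  have hkr : k ≤ r := by
    rw [hk, ← hAcf.2]
    exact Finset.card_filter_le _ _
  have hT'sub : Finset.Icc 2 (k+1) ⊆ Finset.Icc 1 (2*r) := by
    intro x hx
    rw [Finset.mem_Icc] at *
    omega
  have hT'card : (Finset.Icc 2 (k+1)).card = k := by
    rw [Nat.card_Icc]; omega
  have hcnt : ∀ j, ((A.filter (· ≤ 2*r)).filter (· ≤ j)).card
      ≤ ((Finset.Icc 2 (k+1)).filter (· ≤ j)).card := by
    intro j
    have hfil : (Finset.Icc 2 (k+1)).filter (· ≤ j) = Finset.Icc 2 (min (k+1) j) := by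
      ext x
      simp only [Finset.mem_filter, Finset.mem_Icc, le_min_iff]
      omega
    have hle1 : ((A.filter (· ≤ 2*r)).filter (· ≤ j)).card ≤ k := by
      rw [hk]
      exact Finset.card_filter_le _ _
    have hle2 : ((A.filter (· ≤ 2*r)).filter (· ≤ j)).card ≤ j - 1 := by
      have hsub2 : (A.filter (· ≤ 2*r)).filter (· ≤ j) ⊆ Finset.Icc 2 j := by
        intro x hx
        simp only [Finset.mem_filter] at hx
        have hx1 : x ∈ A := hx.1.1
        have hge : 1 ≤ x := (Finset.mem_Icc.mp (hAcf.1 hx1)).1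
        have hne : x ≠ 1 := fun h => h1A (h ▸ hx1)
        rw [Finset.mem_Icc]
        exact ⟨by omega, hx.2⟩
      calc ((A.filter (· ≤ 2*r)).filter (· ≤ j)).card
          ≤ (Finset.Icc 2 j).card := Finset.card_le_card hsub2
        _ = j - 1 := by rw [Nat.card_Icc]; omega
    rw [hfil, Nat.card_Icc]
    omega
  refine ⟨_, swap_window_mem hLC hA (Finset.Icc 2 (k+1)) hT'sub (by rw [hT'card]) hcnt
    (by omega), ?_⟩
  rw [Finset.filter_union]
  have h1 : (Finset.Icc 2 (k+1)).filter (· ≤ 2*r) = Finset.Icc 2 (k+1) :=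
    Finset.filter_true_of_mem (fun x hx => by rw [Finset.mem_Icc] at hx; omega)
  rw [h1, tail_filter_empty, Finset.union_empty]

private lemma trace_shift1 {n r : ℕ} {𝒜 : Finset (Finset ℕ)} (hLC : IsLCIF n r 𝒜)
    (hr : 1 ≤ r) (hn : 2*r ≤ n) {A : Finset ℕ} (hA : A ∈ 𝒜) :
    ∃ A₁ ∈ 𝒜, A₁.filter (· ≤ 2*r) = Finset.Icc 1 ((A.filter (· ≤ 2*r)).card) := by
  have hAcf := mem_chooseFam.mp (hLC.1 hA)
  set k := (A.filter (· ≤ 2*r)).card with hk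
  have hkr : k ≤ r := by
    rw [hk, ← hAcf.2]
    exact Finset.card_filter_le _ _
  have hT'sub : Finset.Icc 1 k ⊆ Finset.Icc 1 (2*r) := by
    intro x hx
    rw [Finset.mem_Icc] at *
    omega
  have hT'card : (Finset.Icc 1 k).card = k := by
    rw [Nat.card_Icc]; omega
  have hcnt : ∀ j, ((A.filter (· ≤ 2*r)).filter (· ≤ j)).card
      ≤ ((Finset.Icc 1 k).filter (· ≤ j)).card := by
    intro j
    have hfil : (Finset.Icc 1 k).filter (· ≤ j) = Finset.Icc 1 (min k j) := by
      ext x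
      simp only [Finset.mem_filter, Finset.mem_Icc, le_min_iff]
      omega
    have hle1 : ((A.filter (· ≤ 2*r)).filter (· ≤ j)).card ≤ k := by
      rw [hk]
      exact Finset.card_filter_le _ _
    have hle2 : ((A.filter (· ≤ 2*r)).filter (· ≤ j)).card ≤ j := by
      have hsub2 : (A.filter (· ≤ 2*r)).filter (· ≤ j) ⊆ Finset.Icc 1 j := by
        intro x hx
        simp only [Finset.mem_filter] at hx
        have hge : 1 ≤ x := (Finset.mem_Icc.mp (hAcf.1 hx.1.1)).1
        rw [Finset.mem_Icc]
        exact ⟨hge, hx.2⟩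
      calc ((A.filter (· ≤ 2*r)).filter (· ≤ j)).card
          ≤ (Finset.Icc 1 j).card := Finset.card_le_card hsub2
        _ = j := by rw [Nat.card_Icc]; omega
    rw [hfil, Nat.card_Icc]
    omega
  refine ⟨_, swap_window_mem hLC hA (Finset.Icc 1 k) hT'sub (by rw [hT'card]) hcnt
    (by omega), ?_⟩
  rw [Finset.filter_union]
  have h1 : (Finset.Icc 1 k).filter (· ≤ 2*r) = Finset.Icc 1 k :=
    Finset.filter_true_of_mem (fun x hx => by rw [Finset.mem_Icc] at hx; omega)
  rw [h1, tail_filter_empty, Finset.union_empty]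

private lemma trace_shift13 {n r : ℕ} {𝒜 : Finset (Finset ℕ)} (hLC : IsLCIF n r 𝒜)
    (hr : 2 ≤ r) (hn : 2*r ≤ n) {A₀ : Finset ℕ} (hA₀ : A₀ ∈ 𝒜)
    (hW : A₀.filter (· ≤ 2*r) = Finset.Icc 2 3) :
    ∃ C ∈ 𝒜, C.filter (· ≤ 2*r) = {1,3} := by
  have hsub : ({1,3} : Finset ℕ) ⊆ Finset.Icc 1 (2*r) := by
    intro x hx
    simp only [Finset.mem_insert, Finset.mem_singleton] at hx
    rw [Finset.mem_Icc]
    rcases hx with h | h <;> omega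
  have hcard13 : ({1,3} : Finset ℕ).card = 2 := by decide
  have hWcard : (A₀.filter (· ≤ 2*r)).card = 2 := by
    rw [hW, Nat.card_Icc]
  have hcnt : ∀ j, ((A₀.filter (· ≤ 2*r)).filter (· ≤ j)).card
      ≤ (({1,3} : Finset ℕ).filter (· ≤ j)).card := by
    intro j
    rw [hW]
    rcases le_or_gt 3 j with h | h
    · have e1 : (Finset.Icc 2 3).filter (· ≤ j) = Finset.Icc 2 3 :=
        Finset.filter_true_of_mem (fun x hx => by rw [Finset.mem_Icc] at hx; omega)
      have e2 : ({1,3} : Finset ℕ).filter (· ≤ j) = {1,3} :=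
        Finset.filter_true_of_mem (fun x hx => by
          simp only [Finset.mem_insert, Finset.mem_singleton] at hx
          rcases hx with h' | h' <;> omega)
      rw [e1, e2, hcard13, Nat.card_Icc]
    · interval_cases j <;> decide
  refine ⟨_, swap_window_mem hLC hA₀ {1,3} hsub (by rw [hcard13, hWcard]) hcnt (by omega), ?_⟩
  rw [Finset.filter_union]
  have h1 : ({1,3} : Finset ℕ).filter (· ≤ 2*r) = {1,3} :=
    Finset.filter_true_of_mem (fun x hx => by
      simp only [Finset.mem_insert, Finset.mem_singleton] at hx
      rcases hx with h' | h' <;> omega)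
  rw [h1, tail_filter_empty, Finset.union_empty]

private lemma meets_window {n r : ℕ} {𝒜 : Finset (Finset ℕ)} (hLC : IsLCIF n r 𝒜)
    (hn : 2*r ≤ n) {A₀ W : Finset ℕ} (hA₀ : A₀ ∈ 𝒜) (hW : A₀.filter (· ≤ 2*r) = W)
    {S : Finset ℕ} (hS : S ∈ 𝒜) : ∃ x ∈ S, x ∈ W := by
  obtain ⟨x, hxS, hxA, hxle⟩ := window_lemma hn hLC hS hA₀
  exact ⟨x, hxS, hW ▸ Finset.mem_filter.mpr ⟨hxA, hxle⟩⟩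

private lemma no_singleton_trace {n r : ℕ} {𝒜 : Finset (Finset ℕ)} (hLC : IsLCIF n r 𝒜)
    (hr : 1 ≤ r) (hn : 2*r ≤ n) {A : Finset ℕ} (hA : A ∈ 𝒜) (h1A : 1 ∉ A)
    (hk : (A.filter (· ≤ 2*r)).card = 1) : False := by
  obtain ⟨A₀, hA₀mem, hA₀W⟩ := trace_shift hLC hr hn hA h1A
  rw [hk] at hA₀W
  have hA₀card : (A₀.filter (· ≤ 2*r)).card = 1 := by
    rw [hA₀W, Nat.card_Icc]
  obtain ⟨A₁, hA₁mem, hA₁W⟩ := trace_shift1 hLC hr hn hA₀mem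
  rw [hA₀card] at hA₁W
  obtain ⟨x, hxA₁, hxW⟩ := meets_window hLC hn hA₀mem hA₀W hA₁mem
  rw [Finset.mem_Icc] at hxW
  have hx2 : x = 2 := by omega
  have : x ∈ A₁.filter (· ≤ 2*r) := Finset.mem_filter.mpr ⟨hxA₁, by omega⟩
  rw [hA₁W, Finset.mem_Icc] at this
  omega

private lemma hit_split (n r : ℕ) (I O X X' : Finset ℕ)
    (hXX : X ⊆ O ∪ X') (hX'X : X' ⊆ X) :
    (((chooseFam n r).filter (fun A => I ⊆ A ∧ Disjoint A O)).filter
        (fun A => (A ∩ X).Nonempty)).card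
      + ((chooseFam n r).filter (fun A => I ⊆ A ∧ Disjoint A (O ∪ X'))).card
      = ((chooseFam n r).filter (fun A => I ⊆ A ∧ Disjoint A O)).card := by
  have hsplit := Finset.card_filter_add_card_filter_not
    (s := (chooseFam n r).filter (fun A => I ⊆ A ∧ Disjoint A O))
    (p := fun A => (A ∩ X).Nonempty)
  rw [← hsplit]
  congr 1
  have hset : (chooseFam n r).filter (fun A => I ⊆ A ∧ Disjoint A (O ∪ X'))
      = ((chooseFam n r).filter (fun A => I ⊆ A ∧ Disjoint A O)).filter
          (fun A => ¬ (A ∩ X).Nonempty) := by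
    rw [Finset.filter_filter]
    apply Finset.filter_congr
    intro A _
    constructor
    · rintro ⟨hI, hOX⟩
      rw [Finset.disjoint_union_right] at hOX
      refine ⟨⟨hI, hOX.1⟩, ?_⟩
      rw [Finset.not_nonempty_iff_eq_empty, ← Finset.disjoint_iff_inter_eq_empty]
      rw [Finset.disjoint_left]
      intro x hxA hxX
      rcases Finset.mem_union.mp (hXX hxX) with h | h
      · exact (Finset.disjoint_left.mp hOX.1) hxA h
      · exact (Finset.disjoint_left.mp hOX.2) hxA h
    · rintro ⟨⟨hI, hO⟩, hXe⟩
      rw [Finset.not_nonempty_iff_eq_empty, ← Finset.disjoint_iff_inter_eq_empty] at hXe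
      exact ⟨hI, Finset.disjoint_union_right.mpr
        ⟨hO, Finset.disjoint_of_subset_right hX'X hXe⟩⟩
  rw [hset]

private lemma main_lt {n r : ℕ} (hr : 3 ≤ r) (hn : 2^(2*r+6)*(r+1)^4 ≤ n)
    {X : Finset ℕ} (hXsub : X ⊆ Finset.Icc 2 n)
    (hc2 : ¬(X.card = 2 ∧ (X ∩ {2, 3}).Nonempty))
    (hc3 : ¬(X.card = 3 ∧ ({2, 3} : Finset ℕ) ⊆ X))
    (hcr : ¬ X ⊆ Finset.Icc 2 (r + 1))
    {𝒜 : Finset (Finset ℕ)} (h𝒜 : IsMLCIF n r 𝒜) (hne : 𝒜 ≠ starFam n r) :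
    hit X 𝒜 < hit X (starFam n r) := by
  obtain ⟨hnbig, hn8r⟩ := n_large hr hn
  have hnr : 2*r ≤ n := by omega
  have hLC := h𝒜.1
  -- the distinguished element of X beyond r+1
  obtain ⟨x₀, hx₀X, hx₀not⟩ := Finset.not_subset.mp hcr
  have hx₀Icc := Finset.mem_Icc.mp (hXsub hx₀X)
  have hx₀ge : r + 2 ≤ x₀ := by
    rw [Finset.mem_Icc] at hx₀not
    omega
  -- a member without 1
  obtain ⟨A, hAmem, h1A⟩ := exists_nonstar_mem h𝒜 hne (by omega)
  -- reduction to E < M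
  have hreduce : ((𝒜 \ starFam n r).filter (fun B => (B ∩ X).Nonempty)).card
      < ((starFam n r \ 𝒜).filter (fun B => (B ∩ X).Nonempty)).card →
      hit X 𝒜 < hit X (starFam n r) := by
    intro hEM
    have h1 : hit X (starFam n r)
        = ((starFam n r \ 𝒜).filter (fun B => (B ∩ X).Nonempty)).card
          + ((starFam n r ∩ 𝒜).filter (fun B => (B ∩ X).Nonempty)).card := by
      unfold hit
      conv_lhs => rw [← Finset.sdiff_union_inter (starFam n r) 𝒜]
      rw [Finset.filter_union]
      exact Finset.card_union_of_disjoint (Finset.disjoint_filter_filter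
        (Finset.disjoint_of_subset_right Finset.inter_subset_right Finset.sdiff_disjoint))
    have h2 : hit X 𝒜
        = ((𝒜 \ starFam n r).filter (fun B => (B ∩ X).Nonempty)).card
          + ((starFam n r ∩ 𝒜).filter (fun B => (B ∩ X).Nonempty)).card := by
      unfold hit
      conv_lhs => rw [← Finset.sdiff_union_inter 𝒜 (starFam n r),
        Finset.inter_comm 𝒜 (starFam n r)]
      rw [Finset.filter_union]
      exact Finset.card_union_of_disjoint (Finset.disjoint_filter_filter
        (Finset.disjoint_of_subset_right Finset.inter_subset_left Finset.sdiff_disjoint))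
    omega
  apply hreduce
  -- every member omitting 1 has at least 2 window elements
  have htrge2 : ∀ A' ∈ 𝒜, 1 ∉ A' → 2 ≤ (A'.filter (· ≤ 2*r)).card := by
    intro A' hA' h1A'
    have hpos : 0 < (A'.filter (· ≤ 2*r)).card := by
      obtain ⟨x, hx1, _, hx3⟩ := window_lemma hnr hLC hA' hA'
      exact Finset.card_pos.mpr ⟨x, Finset.mem_filter.mpr ⟨hx1, hx3⟩⟩
    have hne1 : (A'.filter (· ≤ 2*r)).card ≠ 1 := fun h =>
      no_singleton_trace hLC (by omega) hnr hA' h1A' h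
    omega
  by_cases hcase : ∃ A' ∈ 𝒜, 1 ∉ A' ∧ (A'.filter (· ≤ 2*r)).card = 2
  · -- CASE k = 2
    obtain ⟨A2, hA2mem, h1A2, hA2tr⟩ := hcase
    obtain ⟨A₀, hA₀mem, hA₀W⟩ := trace_shift hLC (by omega) hnr hA2mem h1A2
    rw [hA2tr] at hA₀W
    have hMcrit : ∀ S, Disjoint S (Finset.Icc 2 3) → S ∉ 𝒜 := by
      intro S hdS hSmem
      obtain ⟨x, hxS, hxW⟩ := meets_window hLC hnr hA₀mem hA₀W hSmem
      exact (Finset.disjoint_left.mp hdS) hxS hxW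
    have hE23 : ∀ A' ∈ 𝒜, 1 ∉ A' → Finset.Icc 2 3 ⊆ A' := by
      intro A' hA' h1A'
      have h2mem : 2 ∈ A' := by
        by_contra h2n
        obtain ⟨C1, hC1mem, hC1W⟩ := trace_shift1 hLC (by omega) hnr hA₀mem
        have hWc : (A₀.filter (· ≤ 2*r)).card = 2 := by
          rw [hA₀W, Nat.card_Icc]
        rw [hWc] at hC1W
        obtain ⟨x, hxA', hxW⟩ := meets_window hLC hnr hC1mem hC1W hA'
        rw [Finset.mem_Icc] at hxW
        have hx12 : x = 1 ∨ x = 2 := by omega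
        rcases hx12 with h | h <;> subst h
        · exact h1A' hxA'
        · exact h2n hxA'
      have h3mem : 3 ∈ A' := by
        by_contra h3n
        obtain ⟨C2, hC2mem, hC2W⟩ := trace_shift13 hLC (by omega) hnr hA₀mem hA₀W
        obtain ⟨x, hxA', hxW⟩ := meets_window hLC hnr hC2mem hC2W hA'
        simp only [Finset.mem_insert, Finset.mem_singleton] at hxW
        rcases hxW with h | h <;> subst h
        · exact h1A' hxA'
        · exact h3n hxA'
      intro x hx
      rw [Finset.mem_Icc] at hx
      have hx23 : x = 2 ∨ x = 3 := by omega
      rcases hx23 with h | h <;> subst h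
      · exact h2mem
      · exact h3mem
    -- subsets of chooseFam facts
    have hIccn : Finset.Icc 2 3 ⊆ Finset.Icc 1 n := by
      intro x hx
      rw [Finset.mem_Icc] at *
      omega
    have h1subn : ({1} : Finset ℕ) ⊆ Finset.Icc 1 n := by
      intro x hx
      rw [Finset.mem_singleton] at hx
      subst hx
      rw [Finset.mem_Icc]
      omega
    have hXIccn : X ⊆ Finset.Icc 1 n := by
      intro x hx
      have := Finset.mem_Icc.mp (hXsub hx)
      rw [Finset.mem_Icc]
      omega
    have hX'X : (X \ Finset.Icc 2 3) ⊆ X := Finset.sdiff_subset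
    have hXX : X ⊆ Finset.Icc 2 3 ∪ (X \ Finset.Icc 2 3) := by
      intro x hx
      rw [Finset.mem_union, Finset.mem_sdiff]
      by_cases h : x ∈ Finset.Icc 2 3
      · exact Or.inl h
      · exact Or.inr ⟨hx, h⟩
    have hx₀X' : x₀ ∈ X \ Finset.Icc 2 3 := by
      rw [Finset.mem_sdiff, Finset.mem_Icc]
      exact ⟨hx₀X, by omega⟩
    have hq1 : 1 ≤ (X \ Finset.Icc 2 3).card := Finset.card_pos.mpr ⟨x₀, hx₀X'⟩
    have h1notIcc : (1:ℕ) ∉ Finset.Icc 2 3 := by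
      rw [Finset.mem_Icc]
      omega
    have h1notX : (1:ℕ) ∉ X := fun h => by
      have := Finset.mem_Icc.mp (hXsub h)
      omega
    have hdIccX' : Disjoint (Finset.Icc 2 3) (X \ Finset.Icc 2 3) :=
      (Finset.sdiff_disjoint).symm
    -- M-side
    have hMeq := hit_split n r {1} (Finset.Icc 2 3) X (X \ Finset.Icc 2 3) hXX hX'X
    have hMtot : ((chooseFam n r).filter
        (fun B => {1} ⊆ B ∧ Disjoint B (Finset.Icc 2 3))).card = Nat.choose (n-3) (r-1) := by
      rw [card_filter_IO n r {1} (Finset.Icc 2 3) h1subn hIccn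
        (Finset.disjoint_singleton_left.mpr h1notIcc)
        (by rw [Finset.card_singleton]; omega)]
      rw [Finset.card_singleton, Nat.card_Icc]
      congr 1
    have hMav : ((chooseFam n r).filter
        (fun B => {1} ⊆ B ∧ Disjoint B (Finset.Icc 2 3 ∪ (X \ Finset.Icc 2 3)))).card
        = Nat.choose (n-3-(X \ Finset.Icc 2 3).card) (r-1) := by
      rw [card_filter_IO n r {1} (Finset.Icc 2 3 ∪ (X \ Finset.Icc 2 3)) h1subn
        (Finset.union_subset hIccn (fun x hx => hXIccn (hX'X hx)))
        (Finset.disjoint_singleton_left.mpr (fun h => by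
          rcases Finset.mem_union.mp h with h' | h'
          · exact h1notIcc h'
          · exact h1notX (hX'X h')))
        (by rw [Finset.card_singleton]; omega)]
      rw [Finset.card_singleton, Finset.card_union_of_disjoint hdIccX', Nat.card_Icc]
      congr 1
      omega
    rw [hMtot, hMav] at hMeq
    have hMsub : ((chooseFam n r).filter
        (fun B => {1} ⊆ B ∧ Disjoint B (Finset.Icc 2 3))).filter
          (fun B => (B ∩ X).Nonempty)
        ⊆ (starFam n r \ 𝒜).filter (fun B => (B ∩ X).Nonempty) := by
      intro S hS
      rw [Finset.mem_filter] at hS ⊢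
      obtain ⟨hS1, hS2⟩ := hS
      rw [Finset.mem_filter] at hS1
      obtain ⟨hScf, hS1sub, hSdisj⟩ := hS1
      exact ⟨Finset.mem_sdiff.mpr ⟨mem_starFam.mpr
        ⟨hScf, hS1sub (Finset.mem_singleton_self 1)⟩, hMcrit S hSdisj⟩, hS2⟩
    have hMge := Finset.card_le_card hMsub
    -- E-side
    have hEsub : (𝒜 \ starFam n r).filter (fun B => (B ∩ X).Nonempty)
        ⊆ ((chooseFam n r).filter
            (fun B => Finset.Icc 2 3 ⊆ B ∧ Disjoint B ({1} : Finset ℕ))).filter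
          (fun B => (B ∩ X).Nonempty) := by
      intro A' hA'
      rw [Finset.mem_filter] at hA' ⊢
      obtain ⟨hA'1, hA'2⟩ := hA'
      rw [Finset.mem_sdiff] at hA'1
      obtain ⟨hA'mem, hA'nst⟩ := hA'1
      have hcf : A' ∈ chooseFam n r := hLC.1 hA'mem
      have h1A' : 1 ∉ A' := fun h => hA'nst (mem_starFam.mpr ⟨hcf, h⟩)
      exact ⟨Finset.mem_filter.mpr ⟨hcf, hE23 A' hA'mem h1A',
        Finset.disjoint_singleton_right.mpr h1A'⟩, hA'2⟩
    have hEge := Finset.card_le_card hEsub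
    have hEbase : ((chooseFam n r).filter
        (fun B => Finset.Icc 2 3 ⊆ B ∧ Disjoint B ({1} : Finset ℕ))).card
        = Nat.choose (n-3) (r-2) := by
      rw [card_filter_IO n r (Finset.Icc 2 3) {1} hIccn h1subn
        ((Finset.disjoint_singleton_left.mpr h1notIcc).symm)
        (by rw [Nat.card_Icc]; omega)]
      rw [Finset.card_singleton, Nat.card_Icc]
      congr 1
    by_cases hXI : (X ∩ Finset.Icc 2 3).Nonempty
    · -- X meets {2,3} : then q ≥ 2 and crude bound on E suffices
      have hq2 : 2 ≤ (X \ Finset.Icc 2 3).card := by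
        by_contra hq2n
        push_neg at hq2n
        have hqeq : (X \ Finset.Icc 2 3).card = 1 := by omega
        have hpart : (X \ Finset.Icc 2 3).card + (X ∩ Finset.Icc 2 3).card = X.card :=
          Finset.card_sdiff_add_card_inter X (Finset.Icc 2 3)
        have hi_le : (X ∩ Finset.Icc 2 3).card ≤ 2 := by
          calc (X ∩ Finset.Icc 2 3).card ≤ (Finset.Icc 2 3).card :=
              Finset.card_le_card Finset.inter_subset_right
            _ = 2 := by rw [Nat.card_Icc]
        have hi_ge : 1 ≤ (X ∩ Finset.Icc 2 3).card := Finset.card_pos.mpr hXI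
        have h23Icc : ({2,3} : Finset ℕ) = Finset.Icc 2 3 := by decide
        rcases (by omega : (X ∩ Finset.Icc 2 3).card = 1 ∨ (X ∩ Finset.Icc 2 3).card = 2)
          with h1c | h2c
        · exact hc2 ⟨by omega, by rw [h23Icc]; exact hXI⟩
        · have hXIeq : X ∩ Finset.Icc 2 3 = Finset.Icc 2 3 := by
            apply Finset.eq_of_subset_of_card_le Finset.inter_subset_right
            rw [h2c, Nat.card_Icc]
          apply hc3
          constructor
          · omega
          · rw [h23Icc, ← hXIeq]
            exact Finset.inter_subset_left
      have hEle : (((chooseFam n r).filter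
          (fun B => Finset.Icc 2 3 ⊆ B ∧ Disjoint B ({1} : Finset ℕ))).filter
            (fun B => (B ∩ X).Nonempty)).card ≤ Nat.choose (n-3) (r-2) := by
        rw [← hEbase]
        exact Finset.card_filter_le _ _
      have hineq := ineq3 hr hn (q := (X \ Finset.Icc 2 3).card) hq2
      omega
    · -- X misses {2,3}
      have hXdisj : Disjoint X (Finset.Icc 2 3) := by
        rw [Finset.disjoint_iff_inter_eq_empty, ← Finset.not_nonempty_iff_eq_empty]
        exact hXI
      have hXIcc23 : Disjoint (Finset.Icc 2 3) ({1} ∪ X) := by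
        rw [Finset.disjoint_union_right]
        exact ⟨(Finset.disjoint_singleton_left.mpr h1notIcc).symm, hXdisj.symm⟩
      have hEeq := hit_split n r (Finset.Icc 2 3) {1} X X
        (Finset.subset_union_right) (Finset.Subset.refl X)
      have hEav : ((chooseFam n r).filter
          (fun B => Finset.Icc 2 3 ⊆ B ∧ Disjoint B (({1} : Finset ℕ) ∪ X))).card
          = Nat.choose (n-3-(X \ Finset.Icc 2 3).card) (r-2) := by
        rw [card_filter_IO n r (Finset.Icc 2 3) (({1} : Finset ℕ) ∪ X) hIccn
          (Finset.union_subset h1subn hXIccn) hXIcc23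
          (by rw [Nat.card_Icc]; omega)]
        rw [Nat.card_Icc, Finset.card_union_of_disjoint
          (Finset.disjoint_singleton_left.mpr h1notX)]
        have hXcardeq : (X \ Finset.Icc 2 3).card = X.card := by
          congr 1
          exact Finset.sdiff_eq_self_iff_disjoint.mpr hXdisj
        rw [Finset.card_singleton, hXcardeq]
        congr 1
        omega
      rw [hEbase, hEav] at hEeq
      have hineq := ineq2 hr hn (q := (X \ Finset.Icc 2 3).card) hq1
      omega
  · -- CASE all traces have size ≥ 3
    push_neg at hcase
    have hk3 : 3 ≤ (A.filter (· ≤ 2*r)).card := by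
      have ha := htrge2 A hAmem h1A
      have hb := hcase A hAmem h1A
      omega
    have hkr : (A.filter (· ≤ 2*r)).card ≤ r := by
      rw [← (mem_chooseFam.mp (hLC.1 hAmem)).2]
      exact Finset.card_filter_le _ _
    obtain ⟨A₀, hA₀mem, hA₀W⟩ := trace_shift hLC (by omega) hnr hAmem h1A
    have hMcrit : ∀ S, Disjoint S (Finset.Icc 2 ((A.filter (· ≤ 2*r)).card + 1)) → S ∉ 𝒜 := by
      intro S hdS hSmem
      obtain ⟨x, hxS, hxW⟩ := meets_window hLC hnr hA₀mem hA₀W hSmem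
      exact (Finset.disjoint_left.mp hdS) hxS hxW
    have h1x₀ : (1 : ℕ) ∉ ({x₀} : Finset ℕ) := by
      rw [Finset.mem_singleton]
      omega
    have hI2 : ({1, x₀} : Finset ℕ).card = 2 := by
      rw [Finset.card_insert_of_notMem h1x₀, Finset.card_singleton]
    have hIsub : ({1, x₀} : Finset ℕ) ⊆ Finset.Icc 1 n := by
      intro x hx
      simp only [Finset.mem_insert, Finset.mem_singleton] at hx
      rw [Finset.mem_Icc]
      rcases hx with h | h <;> omega
    have hOsub : Finset.Icc 2 ((A.filter (· ≤ 2*r)).card + 1) ⊆ Finset.Icc 1 n := by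
      intro x hx
      rw [Finset.mem_Icc] at *
      omega
    have hIOd : Disjoint ({1, x₀} : Finset ℕ)
        (Finset.Icc 2 ((A.filter (· ≤ 2*r)).card + 1)) := by
      rw [Finset.disjoint_left]
      intro x hx hx'
      simp only [Finset.mem_insert, Finset.mem_singleton] at hx
      rw [Finset.mem_Icc] at hx'
      rcases hx with h | h <;> omega
    have hMcount : ((chooseFam n r).filter
        (fun S => ({1, x₀} : Finset ℕ) ⊆ S ∧
          Disjoint S (Finset.Icc 2 ((A.filter (· ≤ 2*r)).card + 1)))).card
        = Nat.choose (n-2-(A.filter (· ≤ 2*r)).card) (r-2) := by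
      rw [card_filter_IO n r _ _ hIsub hOsub hIOd (by rw [hI2]; omega)]
      rw [hI2, Nat.card_Icc]
      congr 1
    have hMsub : ((chooseFam n r).filter
        (fun S => ({1, x₀} : Finset ℕ) ⊆ S ∧
          Disjoint S (Finset.Icc 2 ((A.filter (· ≤ 2*r)).card + 1))))
        ⊆ (starFam n r \ 𝒜).filter (fun B => (B ∩ X).Nonempty) := by
      intro S hS
      rw [Finset.mem_filter] at hS ⊢
      obtain ⟨hScf, hSsub, hSdisj⟩ := hS
      refine ⟨Finset.mem_sdiff.mpr ⟨mem_starFam.mpr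
        ⟨hScf, hSsub (Finset.mem_insert_self 1 {x₀})⟩, hMcrit S hSdisj⟩, ?_⟩
      exact ⟨x₀, Finset.mem_inter.mpr
        ⟨hSsub (Finset.mem_insert_of_mem (Finset.mem_singleton_self x₀)), hx₀X⟩⟩
    have hMge := Finset.card_le_card hMsub
    -- E-side : crude bound
    have hW23n : Finset.Icc 2 (2*r) ⊆ Finset.Icc 1 n := by
      intro x hx
      rw [Finset.mem_Icc] at *
      omega
    have hEsub2 : 𝒜 \ starFam n r ⊆ ((Finset.Icc 2 (2*r)).powersetCard 3).biUnion
        (fun P => (chooseFam n r).filter (fun A' => P ⊆ A' ∧ Disjoint A' (∅ : Finset ℕ))) := by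
      intro A' hA'
      rw [Finset.mem_sdiff] at hA'
      have hcf := hLC.1 hA'.1
      have h1A' : 1 ∉ A' := fun h => hA'.2 (mem_starFam.mpr ⟨hcf, h⟩)
      have htr3 : 3 ≤ (A'.filter (· ≤ 2*r)).card := by
        have h2 := htrge2 A' hA'.1 h1A'
        have hne2 := hcase A' hA'.1 h1A'
        omega
      obtain ⟨P, hPsub, hPcard⟩ := Finset.exists_subset_card_eq htr3
      rw [Finset.mem_biUnion]
      refine ⟨P, ?_, ?_⟩
      · rw [Finset.mem_powersetCard]
        refine ⟨?_, hPcard⟩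
        intro x hx
        have hx' := hPsub hx
        rw [Finset.mem_filter] at hx'
        have h1x := (Finset.mem_Icc.mp ((mem_chooseFam.mp hcf).1 hx'.1)).1
        have hxne1 : x ≠ 1 := fun h => h1A' (h ▸ hx'.1)
        rw [Finset.mem_Icc]
        exact ⟨by omega, hx'.2⟩
      · rw [Finset.mem_filter]
        exact ⟨hcf, fun x hx => (Finset.mem_filter.mp (hPsub hx)).1,
          Finset.disjoint_empty_right _⟩
    have hEbound : ((𝒜 \ starFam n r).filter (fun B => (B ∩ X).Nonempty)).card
        ≤ Nat.choose (2*r-1) 3 * Nat.choose (n-3) (r-3) := by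
      calc ((𝒜 \ starFam n r).filter (fun B => (B ∩ X).Nonempty)).card
          ≤ (𝒜 \ starFam n r).card := Finset.card_filter_le _ _
        _ ≤ (((Finset.Icc 2 (2*r)).powersetCard 3).biUnion
            (fun P => (chooseFam n r).filter
              (fun A' => P ⊆ A' ∧ Disjoint A' (∅ : Finset ℕ)))).card :=
            Finset.card_le_card hEsub2
        _ ≤ ∑ P ∈ (Finset.Icc 2 (2*r)).powersetCard 3,
            ((chooseFam n r).filter
              (fun A' => P ⊆ A' ∧ Disjoint A' (∅ : Finset ℕ))).card :=
            Finset.card_biUnion_le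
        _ = ∑ _P ∈ (Finset.Icc 2 (2*r)).powersetCard 3, Nat.choose (n-3) (r-3) := by
            apply Finset.sum_congr rfl
            intro P hP
            rw [Finset.mem_powersetCard] at hP
            rw [card_filter_IO n r P ∅ (hP.1.trans hW23n) (Finset.empty_subset _)
              (Finset.disjoint_empty_right _) (by rw [hP.2]; omega)]
            rw [hP.2, Finset.card_empty]
            congr 1
        _ = ((Finset.Icc 2 (2*r)).powersetCard 3).card * Nat.choose (n-3) (r-3) := by
            rw [Finset.sum_const, smul_eq_mul]
        _ = Nat.choose (2*r-1) 3 * Nat.choose (n-3) (r-3) := by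
            rw [Finset.card_powersetCard, Nat.card_Icc]
            congr 2
    have hineq := ineq1 hr hk3 hkr hn
    omega

end AuxLemmas

/-- For `r ≥ 3` and `n` sufficiently large: for every nonempty
`X ⊆ [2, n]` with `X ≠ {2}`, not (`|X| = 2` and `X ∩ {2,3} ≠ ∅`), not
(`|X| = 3` and `{2,3} ⊆ X`), and `X ⊄ [2, r+1]`, the star is the unique MLCIF
optimal for `X`. -/
theorem stmt4 :
    ∀ r : ℕ, 3 ≤ r → ∃ N : ℕ, ∀ n : ℕ, N ≤ n →
      ∀ X : Finset ℕ, X ⊆ Finset.Icc 2 n → X.Nonempty → X ≠ {2} →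
        ¬ (X.card = 2 ∧ (X ∩ {2, 3}).Nonempty) →
        ¬ (X.card = 3 ∧ ({2, 3} : Finset ℕ) ⊆ X) →
        ¬ X ⊆ Finset.Icc 2 (r + 1) →
        OptimalMLCIF n r X (starFam n r) ∧
        ∀ 𝒜 : Finset (Finset ℕ), OptimalMLCIF n r X 𝒜 → 𝒜 = starFam n r := by
  intro r hr
  refine ⟨2^(2*r+6)*(r+1)^4, ?_⟩
  intro n hn X hXsub hXne hX2 hc2 hc3 hcr
  obtain ⟨hnbig, hn8r⟩ := n_large hr hn
  have hnr : 2*r ≤ n := by omega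
  have hstar : IsMLCIF n r (starFam n r) := star_isMLCIF (by omega) hnr
  constructor
  · refine ⟨hstar, ?_⟩
    intro ℬ hB
    by_cases hBe : ℬ = starFam n r
    · rw [hBe]
    · exact le_of_lt (main_lt hr hn hXsub hc2 hc3 hcr hB hBe)
  · intro 𝒜 hopt
    by_contra hne
    have h1 := hopt.2 (starFam n r) hstar
    have h2 := main_lt hr hn hXsub hc2 hc3 hcr hopt.1 hne
    omega
end

section
/- For all integers n, r, t with n ≥ 2r and 3 ≤ t ≤ r+1, the t-adjusted Hilton–Milner family AHM_t is an MLCIF on ([n] choose r); that is, AHM_t is a left-compressed intersecting family which is maximal under inclusion among left-compressed intersecting families in ([n] choose r). -/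
open Finset

def nth (S : Finset ℕ) (i : ℕ) : ℕ := (S.sort (· ≤ ·)).getD i 0

lemma nth_eq_get (S : Finset ℕ) (i : ℕ) (h : i < (S.sort (· ≤ ·)).length) :
    nth S i = (S.sort (· ≤ ·)).get ⟨i, h⟩ :=
  List.getD_eq_get _ _ ⟨i, h⟩

lemma length_sort' (S : Finset ℕ) : (S.sort (· ≤ ·)).length = S.card :=
  Finset.length_sort _

lemma nth_mem (S : Finset ℕ) (i : ℕ) (h : i < S.card) : nth S i ∈ S := by
  have h' : i < (S.sort (· ≤ ·)).length := by rw [length_sort']; exact h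
  rw [nth_eq_get S i h']
  exact (Finset.mem_sort _).mp (List.get_mem _ _)

lemma nth_lt (S : Finset ℕ) {i j : ℕ} (hij : i < j) (hj : j < S.card) :
    nth S i < nth S j := by
  have hj' : j < (S.sort (· ≤ ·)).length := by rw [length_sort']; exact hj
  have hi' : i < (S.sort (· ≤ ·)).length := lt_trans hij hj'
  rw [nth_eq_get S i hi', nth_eq_get S j hj']
  exact (Finset.sortedLT_sort S).strictMono_get (show (⟨i, hi'⟩ : Fin _) < ⟨j, hj'⟩ from hij)

lemma nth_mono (S : Finset ℕ) {i j : ℕ} (hij : i ≤ j) (hj : j < S.card) :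
    nth S i ≤ nth S j := by
  rcases eq_or_lt_of_le hij with rfl | h
  · exact le_refl _
  · exact le_of_lt (nth_lt S h hj)

lemma exists_nth {S : Finset ℕ} {a : ℕ} (ha : a ∈ S) :
    ∃ j : ℕ, j < S.card ∧ nth S j = a := by
  have : a ∈ S.sort (· ≤ ·) := (Finset.mem_sort _).mpr ha
  obtain ⟨⟨j, hj⟩, h⟩ := List.mem_iff_get.mp this
  refine ⟨j, by rw [← length_sort' S]; exact hj, ?_⟩
  rw [nth_eq_get S j hj]; exact h

lemma nth_lb (S : Finset ℕ) (c : ℕ) (hc : ∀ x ∈ S, c ≤ x) :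
    ∀ i : ℕ, i < S.card → c + i ≤ nth S i := by
  intro i
  induction i with
  | zero => intro h; simpa using hc _ (nth_mem S 0 h)
  | succ k ih =>
    intro h
    have h1 := ih (by omega)
    have h2 := nth_lt S (by omega : k < k + 1) h
    omega

lemma nth_ub (S : Finset ℕ) (c m : ℕ) (hm : Finset.Icc c m ⊆ S) :
    ∀ i : ℕ, i < S.card → c + i ≤ m → nth S i ≤ c + i := by
  intro i
  induction i with
  | zero =>
    intro h hle
    obtain ⟨j, hj, hja⟩ := exists_nth (hm (Finset.mem_Icc.mpr ⟨le_refl c, by omega⟩))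
    have := nth_mono S (Nat.zero_le j) hj
    omega
  | succ k ih =>
    intro h hle
    have h1 : nth S k ≤ c + k := ih (by omega) (by omega)
    by_contra hcon
    push_neg at hcon
    obtain ⟨j, hj, hja⟩ :=
      exists_nth (hm (Finset.mem_Icc.mpr (⟨by omega, hle⟩ : c ≤ c + (k+1) ∧ c + (k+1) ≤ m)))
    rcases lt_or_ge j (k + 1) with hjk | hjk
    · have := nth_mono S (Nat.lt_succ_iff.mp hjk) (by omega : k < S.card)
      omega
    · have := nth_mono S hjk hj
      omega

lemma mem_AHM {n r t : ℕ} {A : Finset ℕ} :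
    A ∈ AHM n r t ↔ A ∈ chooseFam n r ∧
      ((1 ∈ A ∧ (A ∩ Finset.Icc 2 t).Nonempty) ∨ Finset.Icc 2 t ⊆ A) := Finset.mem_filter

lemma AHM_intersecting (n r t : ℕ) (ht : 3 ≤ t) : IntersectingFam (AHM n r t) := by
  intro A hA B hB
  rw [mem_AHM] at hA hB
  obtain ⟨-, hA⟩ := hA; obtain ⟨-, hB⟩ := hB
  rcases hA with ⟨h1A, hA2⟩ | hA2 <;> rcases hB with ⟨h1B, hB2⟩ | hB2
  · exact ⟨1, Finset.mem_inter.mpr ⟨h1A, h1B⟩⟩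
  · obtain ⟨a, ha⟩ := hA2
    rw [Finset.mem_inter] at ha
    exact ⟨a, Finset.mem_inter.mpr ⟨ha.1, hB2 ha.2⟩⟩
  · obtain ⟨b, hb⟩ := hB2
    rw [Finset.mem_inter] at hb
    exact ⟨b, Finset.mem_inter.mpr ⟨hA2 hb.2, hb.1⟩⟩
  · have h2 : (2:ℕ) ∈ Finset.Icc 2 t := Finset.mem_Icc.mpr ⟨le_refl 2, by omega⟩
    exact ⟨2, Finset.mem_inter.mpr ⟨hA2 h2, hB2 h2⟩⟩

lemma AHM_leftCompressed (n r t : ℕ) (ht : 3 ≤ t) (htr : t ≤ r + 1) :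
    LeftCompressed n r (AHM n r t) := by
  intro A hA B hBmem hdom
  rw [mem_AHM] at hA
  obtain ⟨hAc, hApred⟩ := hA
  obtain ⟨hAsub, hAcard⟩ := mem_chooseFam.mp hAc
  obtain ⟨hBsub, hBcard⟩ := mem_chooseFam.mp hBmem
  obtain ⟨hcardEq, hget⟩ := hdom
  have hd : ∀ i, i < r → nth B i ≤ nth A i := by
    intro i hi
    have hB' : i < (B.sort (· ≤ ·)).length := by rw [length_sort', hBcard]; exact hi
    have hA' : i < (A.sort (· ≤ ·)).length := by rw [length_sort', hAcard]; exact hi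
    rw [nth_eq_get B i hB', nth_eq_get A i hA']
    exact hget i hB' hA'
  have hA1 : ∀ x ∈ A, 1 ≤ x := fun x hx => (Finset.mem_Icc.mp (hAsub hx)).1
  have hB1 : ∀ x ∈ B, 1 ≤ x := fun x hx => (Finset.mem_Icc.mp (hBsub hx)).1
  have hr2 : 2 ≤ r := by omega
  rw [mem_AHM]
  refine ⟨hBmem, ?_⟩
  rcases hApred with ⟨h1A, a, ha⟩ | hIA
  · -- A contains 1 and meets [2,t]
    rw [Finset.mem_inter, Finset.mem_Icc] at ha
    obtain ⟨haA, ha2, hat⟩ := ha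
    obtain ⟨j0, hj0, hj0a⟩ := exists_nth h1A
    have hA0 : nth A 0 ≤ 1 := by
      have := nth_mono A (Nat.zero_le j0) hj0; omega
    have hB0 : 1 ≤ nth B 0 := nth_lb B 1 hB1 0 (by omega)
    have hd0 := hd 0 (by omega)
    have h1B : 1 ∈ B := by
      have hB0' : nth B 0 = 1 := by omega
      rw [← hB0']; exact nth_mem B 0 (by omega)
    obtain ⟨j, hj, hja⟩ := exists_nth haA
    rw [hAcard] at hj
    have hj1 : 1 ≤ j := by
      rcases Nat.eq_zero_or_pos j with rfl | h
      · omega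
      · exact h
    have hBl : 1 + j ≤ nth B j := nth_lb B 1 hB1 j (by omega)
    have hBu := hd j hj
    exact Or.inl ⟨h1B, ⟨nth B j, Finset.mem_inter.mpr
      ⟨nth_mem B j (by omega), Finset.mem_Icc.mpr ⟨by omega, by omega⟩⟩⟩⟩
  · -- [2,t] ⊆ A
    by_cases h1A : 1 ∈ A
    · have hIA1 : Finset.Icc 1 t ⊆ A := by
        intro v hv
        rw [Finset.mem_Icc] at hv
        rcases Nat.eq_or_lt_of_le hv.1 with h | h
        · exact h ▸ h1A
        · exact hIA (Finset.mem_Icc.mpr ⟨by omega, hv.2⟩)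
      have htr' : t ≤ r := by
        have h := Finset.card_le_card hIA1
        rw [hAcard, Nat.card_Icc] at h
        omega
      refine Or.inr fun v hv => ?_
      rw [Finset.mem_Icc] at hv
      have hub := nth_ub A 1 t hIA1 (v-1) (by omega) (by omega)
      have hlb := nth_lb B 1 hB1 (v-1) (by omega)
      have hdv := hd (v-1) (by omega)
      have hvv : nth B (v-1) = v := by omega
      rw [← hvv]
      exact nth_mem B (v-1) (by omega)
    · by_cases h1B : 1 ∈ B
      · have hub := nth_ub A 2 t hIA 1 (by omega) (by omega)
        have hlb := nth_lb B 1 hB1 1 (by omega)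
        have hd1 := hd 1 (by omega)
        exact Or.inl ⟨h1B, ⟨nth B 1, Finset.mem_inter.mpr
          ⟨nth_mem B 1 (by omega), Finset.mem_Icc.mpr ⟨by omega, by omega⟩⟩⟩⟩
      · have hB2' : ∀ x ∈ B, 2 ≤ x := by
          intro x hx
          have := hB1 x hx
          have hne : x ≠ 1 := fun h => h1B (h ▸ hx)
          omega
        refine Or.inr fun v hv => ?_
        rw [Finset.mem_Icc] at hv
        have hub := nth_ub A 2 t hIA (v-2) (by omega) (by omega)
        have hlb := nth_lb B 2 hB2' (v-2) (by omega)
        have hdv := hd (v-2) (by omega)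
        have hvv : nth B (v-2) = v := by omega
        rw [← hvv]
        exact nth_mem B (v-2) (by omega)

lemma AHM_max (n r t : ℕ) (hn : 2*r ≤ n) (ht : 3 ≤ t) (htr : t ≤ r+1)
    (ℬ : Finset (Finset ℕ)) (hB : IsLCIF n r ℬ) (hsub : AHM n r t ⊆ ℬ) : ℬ = AHM n r t := by
  obtain ⟨hBc, hBint, -⟩ := hB
  refine Finset.Subset.antisymm ?_ hsub
  intro B hBmem
  by_contra hBnot
  obtain ⟨hBsub, hBcard⟩ := mem_chooseFam.mp (hBc hBmem)
  have hr2 : 2 ≤ r := by omega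
  have htn : t ≤ n := by omega
  have hD : r ≤ (Finset.Icc 1 n \ B).card := by
    rw [Finset.card_sdiff_of_subset hBsub, Nat.card_Icc]
    omega
  have hpred : ¬ ((1 ∈ B ∧ (B ∩ Finset.Icc 2 t).Nonempty) ∨ Finset.Icc 2 t ⊆ B) :=
    fun h => hBnot (mem_AHM.mpr ⟨hBc hBmem, h⟩)
  push_neg at hpred
  obtain ⟨h1, h2⟩ := hpred
  by_cases h1B : 1 ∈ B
  · -- B ∩ [2,t] = ∅ ; take C ⊇ [2,t] disjoint from B
    have hne := h1 h1B
    have hsub2 : Finset.Icc 2 t ⊆ Finset.Icc 1 n \ B := by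
      intro s hs
      rw [Finset.mem_Icc] at hs
      rw [Finset.mem_sdiff]
      refine ⟨Finset.mem_Icc.mpr ⟨by omega, by omega⟩, fun hsB => ?_⟩
      exact (Finset.not_nonempty_iff_eq_empty.mpr hne) ⟨s, Finset.mem_inter.mpr ⟨hsB, Finset.mem_Icc.mpr hs⟩⟩
    obtain ⟨C, hC1, hC2, hC3⟩ :=
      Finset.exists_subsuperset_card_eq hsub2 (by rw [Nat.card_Icc]; omega) hD
    have hCmem : C ∈ AHM n r t :=
      mem_AHM.mpr ⟨mem_chooseFam.mpr
        ⟨fun x hx => (Finset.mem_sdiff.mp (hC2 hx)).1, hC3⟩, Or.inr hC1⟩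
    obtain ⟨x, hx⟩ := hBint B hBmem C (hsub hCmem)
    rw [Finset.mem_inter] at hx
    exact (Finset.mem_sdiff.mp (hC2 hx.2)).2 hx.1
  · -- 1 ∉ B ; take C containing 1 and some s ∈ [2,t] \ B, disjoint from B
    rw [Finset.not_subset] at h2
    obtain ⟨s, hs, hsB⟩ := h2
    rw [Finset.mem_Icc] at hs
    have hsub2 : ({1, s} : Finset ℕ) ⊆ Finset.Icc 1 n \ B := by
      intro x hx
      rw [Finset.mem_insert, Finset.mem_singleton] at hx
      rw [Finset.mem_sdiff]
      rcases hx with rfl | rfl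
      · exact ⟨Finset.mem_Icc.mpr ⟨le_refl 1, by omega⟩, h1B⟩
      · exact ⟨Finset.mem_Icc.mpr ⟨by omega, by omega⟩, hsB⟩
    obtain ⟨C, hC1, hC2, hC3⟩ :=
      Finset.exists_subsuperset_card_eq hsub2
        (le_trans (Finset.card_insert_le _ _) (by simp; omega)) hD
    have h1C : 1 ∈ C := hC1 (Finset.mem_insert_self _ _)
    have hsC : s ∈ C := hC1 (Finset.mem_insert.mpr (Or.inr (Finset.mem_singleton_self _)))
    have hCmem : C ∈ AHM n r t :=
      mem_AHM.mpr ⟨mem_chooseFam.mpr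
        ⟨fun x hx => (Finset.mem_sdiff.mp (hC2 hx)).1, hC3⟩,
        Or.inl ⟨h1C, ⟨s, Finset.mem_inter.mpr ⟨hsC, Finset.mem_Icc.mpr hs⟩⟩⟩⟩
    obtain ⟨x, hx⟩ := hBint B hBmem C (hsub hCmem)
    rw [Finset.mem_inter] at hx
    exact (Finset.mem_sdiff.mp (hC2 hx.2)).2 hx.1


/-- For `n ≥ 2r` and `3 ≤ t ≤ r + 1`, the `t`-adjusted
Hilton–Milner family `AHM_t` is an MLCIF on `([n] choose r)`. -/
theorem stmt11 (n r t : ℕ) (hn : 2 * r ≤ n) (ht : 3 ≤ t) (htr : t ≤ r + 1) :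
    IsMLCIF n r (AHM n r t) := by
  refine ⟨⟨Finset.filter_subset _ _, AHM_intersecting n r t ht,
    AHM_leftCompressed n r t ht htr⟩, fun ℬ hB hsub => AHM_max n r t hn ht htr ℬ hB hsub⟩
end
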